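/- arXiv:1009.6124 — 7 statements merged into one kernel-verified Lean document; each statement's English description precedes it below -/
import Mathlib

section
/- Let H be a complex Hilbert space, let u : [0,∞) → H be differentiable and satisfy u'(t) = A(t)(u(t)) + F(t, u(t)) for all t ≥ 0, where for each t, A(t) is a bounded linear operator on H and F(t,·) : H → H. Assume there are constants c₀ > 0 and p > 1 with ‖F(t,x)‖ ≤ c₀‖x‖^p for all t ≥ 0 and x ∈ H, and a constant k > 0 with Re⟪A(t)x, x⟫ ≤ -k‖x‖² for all t ≥ 0 and x ∈ H. Let ε ∈ (0, k) and set λ = (c₀/ε)^{1/(p-1)}. If ‖u(0)‖ ≤ 1/λ, then for all t ≥ 0 one has ‖u(t)‖ ≤ (1/λ)·e^{-(k-ε)t}. -/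
open Set Filter Real Topology

private lemma sq_le_imp {x y : ℝ} (hx : 0 ≤ x) (hy : 0 ≤ y) (h : x ^ 2 ≤ y ^ 2) : x ≤ y := by
  nlinarith [sq_nonneg (x - y), sq_nonneg (x + y)]

/-- **Theorem 1.2** (Ramm). Let `H` be a complex Hilbert space, `u` a differentiable
solution of `u' = A(t)u + F(t,u)` on `[0,∞)`, where each `A t` is a bounded linear
operator with `Re⟪A(t)x, x⟫ ≤ -k‖x‖²` and `‖F(t,x)‖ ≤ c₀‖x‖^p`, `p > 1`, `c₀ > 0`,
`k > 0`.  For `ε ∈ (0,k)` and `λ = (c₀/ε)^{1/(p-1)}`, if `‖u 0‖ ≤ 1/λ` then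
`‖u t‖ ≤ (1/λ) e^{-(k-ε)t}` for all `t ≥ 0`. -/
theorem asymptotic_decay_constant_kappa
    {H : Type*} [NormedAddCommGroup H] [InnerProductSpace ℂ H] [CompleteSpace H]
    (A : ℝ → H →L[ℂ] H) (F : ℝ → H → H) (u : ℝ → H)
    (hu : ∀ t : ℝ, 0 ≤ t → HasDerivAt u (A t (u t) + F t (u t)) t)
    (c₀ p : ℝ) (hc₀ : 0 < c₀) (hp : 1 < p)
    (hF : ∀ t : ℝ, 0 ≤ t → ∀ x : H, ‖F t x‖ ≤ c₀ * ‖x‖ ^ p)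
    (k : ℝ) (hk : 0 < k)
    (hA : ∀ t : ℝ, 0 ≤ t → ∀ x : H, (inner ℂ (A t x) x : ℂ).re ≤ -k * ‖x‖ ^ 2)
    (ε : ℝ) (hε : ε ∈ Set.Ioo 0 k)
    (lam : ℝ) (hlam : lam = (c₀ / ε) ^ (1 / (p - 1)))
    (hu0 : ‖u 0‖ ≤ 1 / lam) :
    ∀ t : ℝ, 0 ≤ t → ‖u t‖ ≤ (1 / lam) * Real.exp (-(k - ε) * t) := by
  obtain ⟨hε0, hεk⟩ := hε
  have hp1 : 0 < p - 1 := by linarith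
  have hlam_pos : 0 < lam := hlam ▸ Real.rpow_pos_of_pos (div_pos hc₀ hε0) _
  -- key algebraic identity
  have hkey : c₀ * (1 / lam) ^ (p - 1) = ε := by
    have hce : (0:ℝ) < c₀ / ε := div_pos hc₀ hε0
    have h1 : lam ^ (p - 1) = c₀ / ε := by
      rw [hlam, ← Real.rpow_mul hce.le, one_div,
        inv_mul_cancel₀ (ne_of_gt hp1), Real.rpow_one]
    rw [one_div, Real.inv_rpow hlam_pos.le, h1]
    field_simp
  -- main comparison, for ε' ∈ (ε, k)
  have key : ∀ ε' ∈ Set.Ioo ε k, ∀ t : ℝ, 0 ≤ t →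
      ‖u t‖ ^ 2 ≤ (1 / lam) ^ 2 * Real.exp (-(2 * (k - ε')) * t) := by
    intro ε' hε' b hb
    obtain ⟨hεε', hε'k⟩ := hε'
    set B : ℝ → ℝ := fun s => (1 / lam) ^ 2 * Real.exp (-(2 * (k - ε')) * s) with hB_def
    set B' : ℝ → ℝ := fun s =>
      (1 / lam) ^ 2 * (Real.exp (-(2 * (k - ε')) * s) * -(2 * (k - ε'))) with hB'_def
    have hB : ∀ s : ℝ, HasDerivAt B (B' s) s := by
      intro s
      have : HasDerivAt (fun s : ℝ => -(2 * (k - ε')) * s) (-(2 * (k - ε'))) s := by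
        simpa using (hasDerivAt_id s).const_mul (-(2 * (k - ε')))
      exact (this.exp).const_mul _
    have hcont : ContinuousOn (fun s => ‖u s‖ ^ 2) (Icc 0 b) := fun s hs =>
      (((hu s hs.1).continuousAt).norm.pow 2).continuousWithinAt
    have hf' : ∀ s ∈ Ico 0 b, HasDerivWithinAt (fun s => ‖u s‖ ^ 2)
        (2 * (inner ℂ (A s (u s) + F s (u s)) (u s) : ℂ).re) (Ici s) s := by
      intro s hs
      have h1 := HasDerivAt.inner ℂ (hu s hs.1) (hu s hs.1)
      have h2 := Complex.reCLM.hasFDerivAt.comp_hasDerivAt s h1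
      simp only [Function.comp_def] at h2
      have h3 : (fun τ => Complex.reCLM ((inner ℂ (u τ) (u τ) : ℂ))) = fun τ => ‖u τ‖ ^ 2 := by
        funext τ
        rw [Complex.reCLM_apply, ← inner_self_eq_norm_sq (𝕜 := ℂ), RCLike.re_to_complex]
      rw [h3] at h2
      have h4 : Complex.reCLM ((inner ℂ (u s) (A s (u s) + F s (u s)) : ℂ)
            + (inner ℂ (A s (u s) + F s (u s)) (u s) : ℂ))
          = 2 * (inner ℂ (A s (u s) + F s (u s)) (u s) : ℂ).re := by
        have := inner_conj_symm (𝕜 := ℂ) (u s) (A s (u s) + F s (u s))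
        simp only [Complex.reCLM_apply, Complex.add_re]
        rw [← this, Complex.conj_re]
        ring
      rw [h4] at h2
      exact h2.hasDerivWithinAt
    have ha : ‖u 0‖ ^ 2 ≤ B 0 := by
      have : ‖u 0‖ ^ 2 ≤ (1 / lam) ^ 2 := pow_le_pow_left₀ (norm_nonneg _) hu0 2
      simpa [hB_def] using this
    have bound : ∀ s ∈ Ico 0 b, ‖u s‖ ^ 2 = B s →
        2 * (inner ℂ (A s (u s) + F s (u s)) (u s) : ℂ).re < B' s := by
      intro s hs hfB
      have hBpos : 0 < B s := by
        have := Real.exp_pos (-(2 * (k - ε')) * s)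
        positivity
      have hRpos : 0 < ‖u s‖ := by
        rcases (norm_nonneg (u s)).lt_or_eq with h | h
        · exact h
        · exfalso; rw [← h] at hfB; simp [hB_def] at hfB; nlinarith [Real.exp_pos (-(2 * (k - ε')) * s)]
      have hRle : ‖u s‖ ≤ 1 / lam := by
        apply sq_le_imp (norm_nonneg _) (by positivity)
        rw [hfB, hB_def]
        have : Real.exp (-(2 * (k - ε')) * s) ≤ 1 := by
          apply Real.exp_le_one_iff.mpr
          have : 0 ≤ 2 * (k - ε') * s := by
            apply mul_nonneg (by linarith) hs.1
          linarith
        nlinarith [sq_nonneg (1/lam)]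
      -- estimate re⟪u', u⟫
      have hAe := hA s hs.1 (u s)
      have hFe := hF s hs.1 (u s)
      have hinner_split : (inner ℂ (A s (u s) + F s (u s)) (u s) : ℂ).re
          = (inner ℂ (A s (u s)) (u s) : ℂ).re + (inner ℂ (F s (u s)) (u s) : ℂ).re := by
        rw [inner_add_left]; simp
      have hFinner : (inner ℂ (F s (u s)) (u s) : ℂ).re ≤ ε * ‖u s‖ * ‖u s‖ := by
        have h5 : (inner ℂ (F s (u s)) (u s) : ℂ).re ≤ ‖F s (u s)‖ * ‖u s‖ := by
          calc (inner ℂ (F s (u s)) (u s) : ℂ).re ≤ ‖(inner ℂ (F s (u s)) (u s) : ℂ)‖ :=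
                Complex.re_le_norm _
            _ ≤ ‖F s (u s)‖ * ‖u s‖ := norm_inner_le_norm _ _
        have h6 : ‖F s (u s)‖ ≤ ε * ‖u s‖ := by
          calc ‖F s (u s)‖ ≤ c₀ * ‖u s‖ ^ p := hFe
            _ = c₀ * ‖u s‖ ^ (p - 1) * ‖u s‖ := by
                have h := Real.rpow_add hRpos (p - 1) 1
                rw [sub_add_cancel, Real.rpow_one] at h
                rw [h]; ring
            _ ≤ ε * ‖u s‖ := by
                have : c₀ * ‖u s‖ ^ (p - 1) ≤ c₀ * (1 / lam) ^ (p - 1) :=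
                  mul_le_mul_of_nonneg_left
                    (Real.rpow_le_rpow (norm_nonneg _) hRle (le_of_lt hp1)) (le_of_lt hc₀)
                rw [hkey] at this
                exact mul_le_mul_of_nonneg_right this (norm_nonneg _)
        calc (inner ℂ (F s (u s)) (u s) : ℂ).re ≤ ‖F s (u s)‖ * ‖u s‖ := h5
          _ ≤ ε * ‖u s‖ * ‖u s‖ := mul_le_mul_of_nonneg_right h6 (norm_nonneg _)
      have hmain : (inner ℂ (A s (u s) + F s (u s)) (u s) : ℂ).re ≤ -(k - ε) * ‖u s‖ ^ 2 := by
        rw [hinner_split]; nlinarith [sq_nonneg (‖u s‖)]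
      have hB'eq : B' s = B s * -(2 * (k - ε')) := by
        simp [hB'_def, hB_def]; ring
      rw [hB'eq, ← hfB]
      nlinarith [hBpos, hfB]
    have := image_le_of_deriv_right_lt_deriv_boundary hcont hf' ha hB bound
      (show b ∈ Icc 0 b from ⟨hb, le_refl b⟩)
    simpa [hB_def] using this
  -- pass to the limit ε' → ε⁺
  intro t ht
  have htend : Tendsto (fun ε' : ℝ => 1 / lam * Real.exp (-(k - ε') * t)) (𝓝[>] ε)
      (𝓝 (1 / lam * Real.exp (-(k - ε) * t))) := by
    apply Tendsto.mono_left _ nhdsWithin_le_nhds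
    exact (Continuous.tendsto (by continuity) ε)
  refine ge_of_tendsto htend ?_
  filter_upwards [Ioo_mem_nhdsGT_of_mem (show ε ∈ Ico ε k from ⟨le_refl ε, hεk⟩)] with ε' hε'
  have h := key ε' hε' t ht
  apply sq_le_imp (norm_nonneg _) (by positivity)
  calc ‖u t‖ ^ 2 ≤ (1 / lam) ^ 2 * Real.exp (-(2 * (k - ε')) * t) := h
    _ = (1 / lam * Real.exp (-(k - ε') * t)) ^ 2 := by
        have he : Real.exp (-(k - ε') * t) ^ 2 = Real.exp (-(2 * (k - ε')) * t) := by
          rw [sq, ← Real.exp_add]; ring_nf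
        rw [mul_pow, he]
end

section
/- Let H be a complex Hilbert space, let u : [0,∞) → H be differentiable and satisfy u'(t) = A(t)(u(t)) + F(t, u(t)) for all t ≥ 0, where for each t, A(t) is a bounded linear operator on H and F(t,·) : H → H. Assume there are constants c₀ > 0 and p > 1 with ‖F(t,x)‖ ≤ c₀‖x‖^p for all t ≥ 0 and x ∈ H. Let c₁ > 0, 0 < q ≤ 1, and set γ(t) = c₁/(1+t)^q; assume Re⟪A(t)x, x⟫ ≤ -γ(t)‖x‖² for all t ≥ 0 and x ∈ H. Let ε ∈ (0, c₁) satisfy (p-1)(c₁-ε) ≥ q, set λ = (c₀/ε)^{1/(p-1)}, and assume ‖u(0)‖ ≤ 1/λ. Then for all t ≥ 0 one has 0 ≤ ‖u(t)‖ ≤ 1/(λ·(1+t)^{c₁-ε}). -/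
/-- Mean value inequality for `rpow`: for `1 ≤ s` and `0 ≤ b ≤ a`,
`a ^ s - b ^ s ≤ s * a ^ (s - 1) * (a - b)`. -/
lemma rpow_sub_rpow_le_mvt {s b a : ℝ} (hs : 1 ≤ s) (hb : 0 ≤ b) (hba : b ≤ a) :
    a ^ s - b ^ s ≤ s * a ^ (s - 1) * (a - b) := by
  have ha : 0 ≤ a := hb.trans hba
  have key := norm_image_sub_le_of_norm_deriv_le_segment'
    (f := fun x : ℝ => x ^ s) (f' := fun x : ℝ => s * x ^ (s - 1)) (a := b) (b := a)
    (fun x _ => (Real.hasDerivAt_rpow_const (Or.inr hs)).hasDerivWithinAt)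
    (C := s * a ^ (s - 1)) ?_ a (Set.right_mem_Icc.2 hba)
  · calc a ^ s - b ^ s ≤ |a ^ s - b ^ s| := le_abs_self _
      _ ≤ s * a ^ (s - 1) * (a - b) := key
  · intro x hx
    have hx0 : 0 ≤ x := hb.trans hx.1
    have h1 : x ^ (s - 1) ≤ a ^ (s - 1) :=
      Real.rpow_le_rpow hx0 hx.2.le (by linarith)
    have h2 : 0 ≤ x ^ (s - 1) := Real.rpow_nonneg hx0 _
    have hs0 : (0:ℝ) ≤ s := by linarith
    show ‖s * x ^ (s - 1)‖ ≤ s * a ^ (s - 1)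
    rw [Real.norm_eq_abs, abs_of_nonneg (by positivity)]
    exact mul_le_mul_of_nonneg_left h1 hs0

set_option maxHeartbeats 1000000 in
/-- **Theorem 1.4** (Ramm). Decay for `u' = A(t)u + F(t,u)` when the dissipativity
rate `γ(t) = c₁/(1+t)^q`, `0 < q ≤ 1`, tends to zero: if `ε ∈ (0,c₁)`,
`(p-1)(c₁-ε) ≥ q`, `λ = (c₀/ε)^{1/(p-1)}` and `‖u 0‖ ≤ 1/λ`, then
`0 ≤ ‖u t‖ ≤ 1/(λ(1+t)^{c₁-ε})` for all `t ≥ 0`. -/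
theorem asymptotic_decay_vanishing_gamma
    {H : Type*} [NormedAddCommGroup H] [InnerProductSpace ℂ H] [CompleteSpace H]
    (A : ℝ → H →L[ℂ] H) (F : ℝ → H → H) (u : ℝ → H)
    (hu : ∀ t : ℝ, 0 ≤ t → HasDerivAt u (A t (u t) + F t (u t)) t)
    (c₀ p : ℝ) (hc₀ : 0 < c₀) (hp : 1 < p)
    (hF : ∀ t : ℝ, 0 ≤ t → ∀ x : H, ‖F t x‖ ≤ c₀ * ‖x‖ ^ p)
    (c₁ q : ℝ) (hc₁ : 0 < c₁) (hq : 0 < q) (hq1 : q ≤ 1)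
    (γ : ℝ → ℝ) (hγ : ∀ t : ℝ, γ t = c₁ / (1 + t) ^ q)
    (hA : ∀ t : ℝ, 0 ≤ t → ∀ x : H, (inner ℂ (A t x) x : ℂ).re ≤ -γ t * ‖x‖ ^ 2)
    (ε : ℝ) (hε : ε ∈ Set.Ioo 0 c₁)
    (hpq : (p - 1) * (c₁ - ε) ≥ q)
    (lam : ℝ) (hlam : lam = (c₀ / ε) ^ (1 / (p - 1)))
    (hu0 : ‖u 0‖ ≤ 1 / lam) :
    ∀ t : ℝ, 0 ≤ t → 0 ≤ ‖u t‖ ∧ ‖u t‖ ≤ 1 / (lam * (1 + t) ^ (c₁ - ε)) := by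
  obtain ⟨hε0, hεc₁⟩ := hε
  have hp1 : (0:ℝ) < p - 1 := by linarith
  have hce : (0:ℝ) < c₁ - ε := by linarith
  have hcdiv : (0:ℝ) < c₀ / ε := div_pos hc₀ hε0
  have hlam0 : 0 < lam := by rw [hlam]; exact Real.rpow_pos_of_pos hcdiv _
  set m : ℝ := lam⁻¹ with hm
  have hm0 : 0 < m := inv_pos.2 hlam0
  -- key constant identity
  have hmp1 : m ^ (p - 1) = ε / c₀ := by
    rw [hm, hlam, ← Real.rpow_neg hcdiv.le, ← Real.rpow_mul hcdiv.le,
      show -(1 / (p - 1)) * (p - 1) = -1 by field_simp, Real.rpow_neg_one, inv_div]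
  set c : ℝ := c₁ - ε with hc
  set v : ℝ → H := fun t => A t (u t) + F t (u t) with hv
  set f : ℝ → ℝ := fun t => ‖u t‖ ^ 2 with hf
  set φ : ℝ → ℝ := fun t => 2 * (inner ℂ (v t) (u t) : ℂ).re with hφ
  set B : ℝ → ℝ := fun t => m ^ 2 * (1 + t) ^ (-(2 * c)) with hB
  set B' : ℝ → ℝ := fun t => m ^ 2 * (-(2 * c) * (1 + t) ^ (-(2 * c) - 1)) with hB'
  set s : ℝ := (p + 1) / 2 with hs
  have hs1 : 1 ≤ s := by rw [hs]; linarith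
  -- derivative of f
  have hfd : ∀ t : ℝ, 0 ≤ t → HasDerivAt f (φ t) t := by
    intro t ht
    have h1 := (hu t ht).inner ℂ (hu t ht)
    have h2 : HasDerivAt (fun r => Complex.reCLM (inner ℂ (u r) (u r) : ℂ))
        (Complex.reCLM ((inner ℂ (u t) (v t) : ℂ) + inner ℂ (v t) (u t))) t :=
      Complex.reCLM.hasFDerivAt.comp_hasDerivAt t h1
    have h3 : (fun r => Complex.reCLM (inner ℂ (u r) (u r) : ℂ)) = f := by
      funext r
      simp only [hf]
      simpa using inner_self_eq_norm_sq (𝕜 := ℂ) (u r)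
    have h5 : (inner ℂ (u t) (v t) : ℂ).re = (inner ℂ (v t) (u t) : ℂ).re := by
      rw [← inner_conj_symm (v t) (u t)]
      exact Complex.conj_re _
    have h4 : Complex.reCLM ((inner ℂ (u t) (v t) : ℂ) + inner ℂ (v t) (u t)) = φ t := by
      simp [hφ, h5]; ring
    rw [h3, h4] at h2
    exact h2
  -- γ is positive
  have hγpos : ∀ t : ℝ, 0 ≤ t → 0 < γ t := by
    intro t ht
    rw [hγ]
    have : (0:ℝ) < 1 + t := by linarith
    positivity
  -- differential inequality for f
  have hφle : ∀ t : ℝ, 0 ≤ t → φ t ≤ -(2 * γ t) * f t + 2 * c₀ * f t ^ s := by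
    intro t ht
    have h1 : (inner ℂ (v t) (u t) : ℂ).re
        = (inner ℂ (A t (u t)) (u t) : ℂ).re + (inner ℂ (F t (u t)) (u t) : ℂ).re := by
      rw [hv]; simp [inner_add_left]
    have h2 := hA t ht (u t)
    have h3 : (inner ℂ (F t (u t)) (u t) : ℂ).re ≤ ‖F t (u t)‖ * ‖u t‖ := by
      simpa using re_inner_le_norm (𝕜 := ℂ) (F t (u t)) (u t)
    have h4 : ‖F t (u t)‖ * ‖u t‖ ≤ c₀ * ‖u t‖ ^ p * ‖u t‖ :=
      mul_le_mul_of_nonneg_right (hF t ht (u t)) (norm_nonneg _)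
    have h5 : f t ^ s = ‖u t‖ ^ p * ‖u t‖ := by
      rw [hf]
      show (‖u t‖ ^ 2) ^ s = _
      rw [← Real.rpow_two, ← Real.rpow_mul (norm_nonneg _),
        show (2:ℝ) * s = p + 1 by rw [hs]; ring,
        Real.rpow_add' (norm_nonneg _) (by linarith : p + 1 ≠ 0), Real.rpow_one]
    rw [h5]
    show 2 * (inner ℂ (v t) (u t) : ℂ).re
        ≤ -(2 * γ t) * ‖u t‖ ^ 2 + 2 * c₀ * (‖u t‖ ^ p * ‖u t‖)
    rw [h1]
    linarith
  -- derivative of B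
  have hBd : ∀ t : ℝ, 0 ≤ t → HasDerivAt B (B' t) t := by
    intro t ht
    have h1t : (0:ℝ) < 1 + t := by linarith
    have h1 : HasDerivAt (fun x : ℝ => 1 + x) 1 t := by
      simpa using (hasDerivAt_id t).const_add (1:ℝ)
    have h2 := (Real.hasDerivAt_rpow_const (x := 1 + t) (p := -(2*c)) (Or.inl h1t.ne')).comp t h1
    have h3 := h2.const_mul (m ^ 2)
    simp only [hB, hB']
    exact h3.congr_deriv (by ring)
  -- the main scalar inequality : B is a supersolution
  have hmain : ∀ t : ℝ, 0 ≤ t → -(2 * γ t) * B t + 2 * c₀ * B t ^ s ≤ B' t := by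
    intro t ht
    have hy : (1:ℝ) ≤ 1 + t := by linarith
    have hy0 : (0:ℝ) < 1 + t := by linarith
    set P : ℝ := (1 + t) ^ (-(2 * c)) with hP
    have hP0 : 0 < P := Real.rpow_pos_of_pos hy0 _
    set Y1 : ℝ := (1 + t) ^ (-((p - 1) * c)) with hY1
    set Ym1 : ℝ := (1 + t) ^ (-(1:ℝ)) with hYm1
    -- rewrite the nonlinear term
    have h1 : 2 * c₀ * B t ^ s = 2 * ε * (m ^ 2 * (P * Y1)) := by
      have e1 : B t ^ s = (m ^ 2) ^ s * P ^ s :=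
        Real.mul_rpow (by positivity) hP0.le
      have e2 : (m ^ 2 : ℝ) ^ s = (ε / c₀) * m ^ 2 := by
        rw [← Real.rpow_two, ← Real.rpow_mul hm0.le,
          show (2:ℝ) * s = (p - 1) + 2 by rw [hs]; ring,
          Real.rpow_add hm0, hmp1, Real.rpow_two]
      have e3 : P ^ s = P * Y1 := by
        rw [hP, ← Real.rpow_mul hy0.le, hY1,
          show -(2 * c) * s = -(2 * c) + -((p - 1) * c) by rw [hs]; ring,
          Real.rpow_add hy0]
      rw [e1, e2, e3]
      field_simp
    have h2 : (1 + t) ^ (-(2 * c) - 1) = P * Ym1 := by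
      rw [hP, hYm1, ← Real.rpow_add hy0]
      congr 1
    -- scalar comparison
    have e4 : Y1 ≤ (1 + t) ^ (-q) :=
      Real.rpow_le_rpow_of_exponent_le hy (by nlinarith)
    have e5 : Ym1 ≤ (1 + t) ^ (-q) :=
      Real.rpow_le_rpow_of_exponent_le hy (by linarith)
    have e6 : γ t = c₁ * (1 + t) ^ (-q) := by
      rw [hγ, Real.rpow_neg hy0.le, div_eq_mul_inv]
    have hsc : ε * Y1 + c * Ym1 ≤ γ t := by
      rw [e6]
      calc ε * Y1 + c * Ym1 ≤ ε * (1 + t) ^ (-q) + c * (1 + t) ^ (-q) := by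
            gcongr
        _ = c₁ * (1 + t) ^ (-q) := by rw [hc]; try ring
    have key : 2 * (m ^ 2 * P) * (ε * Y1 + c * Ym1) ≤ 2 * (m ^ 2 * P) * γ t :=
      mul_le_mul_of_nonneg_left hsc (by positivity)
    have hBt : B t = m ^ 2 * P := by simp only [hB]; rfl
    have hB't : B' t = m ^ 2 * (-(2 * c) * (P * Ym1)) := by
      simp only [hB']; rw [h2]
    rw [h1, hBt, hB't]
    linarith [key]
  -- the comparison argument : f ≤ B on [0, ∞)
  have hmainB : ∀ T : ℝ, 0 ≤ T → f T ≤ B T := by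
    intro T hT
    set R : ℝ := m ^ 2 + 1 with hR
    have hR0 : (0:ℝ) < R := by positivity
    set K : ℝ := 2 * c₀ * s * R ^ (s - 1) + 1 with hK
    have hRs0 : (0:ℝ) < R ^ (s - 1) := Real.rpow_pos_of_pos hR0 _
    have hK0 : (0:ℝ) < K := by
      have : (0:ℝ) < 2 * c₀ * s := by positivity
      nlinarith
    have hf0 : f 0 ≤ B 0 := by
      have e1 : B 0 = m ^ 2 := by
        simp only [hB]
        norm_num
      have e2 : f 0 ≤ (1 / lam) ^ 2 := by
        simp only [hf]
        exact pow_le_pow_left₀ (norm_nonneg _) hu0 2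
      rw [e1, hm]
      calc f 0 ≤ (1 / lam) ^ 2 := e2
        _ = lam⁻¹ ^ 2 := by rw [one_div]
    have step : ∀ δ : ℝ, 0 < δ → δ ≤ Real.exp (-(K * T)) →
        f T ≤ B T + δ * Real.exp (K * T) := by
      intro δ hδ0 hδ1
      have hexp : ∀ x : ℝ, HasDerivAt (fun y : ℝ => δ * Real.exp (K * y))
          (δ * (Real.exp (K * x) * K)) x := by
        intro x
        have h1 : HasDerivAt (fun y : ℝ => K * y) K x := by
          simpa using (hasDerivAt_id x).const_mul K
        exact ((Real.hasDerivAt_exp (K * x)).comp x h1).const_mul δ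
      refine image_le_of_deriv_right_lt_deriv_boundary' (f := f) (f' := φ) (a := 0) (b := T)
        (B := fun x => B x + δ * Real.exp (K * x))
        (B' := fun x => B' x + δ * (Real.exp (K * x) * K))
        ?_ ?_ ?_ ?_ ?_ ?_ (Set.right_mem_Icc.2 hT)
      · exact fun x hx => (hfd x hx.1).continuousAt.continuousWithinAt
      · exact fun x hx => (hfd x hx.1).hasDerivWithinAt
      · show f 0 ≤ B 0 + δ * Real.exp (K * 0)
        have : 0 < δ * Real.exp (K * 0) := by positivity
        linarith
      · exact fun x hx => ((hBd x hx.1).add (hexp x)).continuousAt.continuousWithinAt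
      · exact fun x hx => ((hBd x hx.1).add (hexp x)).hasDerivWithinAt
      · -- the crucial bound at touching points
        intro x hx hfx
        have hx0 : 0 ≤ x := hx.1
        have hy : (1:ℝ) ≤ 1 + x := by linarith
        set D : ℝ := δ * Real.exp (K * x) with hD
        have hD0 : 0 < D := by positivity
        have hD1 : D ≤ 1 := by
          rw [hD]
          calc δ * Real.exp (K * x) ≤ Real.exp (-(K * T)) * Real.exp (K * x) := by
                exact mul_le_mul_of_nonneg_right hδ1 (Real.exp_pos _).le
            _ = Real.exp (K * x - K * T) := by rw [← Real.exp_add]; ring_nf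
            _ ≤ 1 := by
                rw [Real.exp_le_one_iff]
                have : x ≤ T := hx.2.le
                nlinarith
        have hBx0 : 0 ≤ B x := by
          simp only [hB]
          positivity
        have hBxm : B x ≤ m ^ 2 := by
          simp only [hB]
          have := Real.rpow_le_one_of_one_le_of_nonpos hy (by nlinarith : -(2*c) ≤ 0)
          nlinarith [sq_nonneg m]
        have hfxB : f x = B x + D := hfx
        have hfxR : f x ≤ R := by rw [hfxB, hR]; linarith
        have hfx0 : B x ≤ f x := by rw [hfxB]; linarith
        have hmvt : f x ^ s - B x ^ s ≤ s * f x ^ (s - 1) * D := by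
          have h := rpow_sub_rpow_le_mvt hs1 hBx0 hfx0
          have e : f x - B x = D := by rw [hfxB]; ring
          rw [e] at h
          exact h
        have hfs1 : f x ^ (s - 1) ≤ R ^ (s - 1) :=
          Real.rpow_le_rpow (hBx0.trans hfx0) hfxR (by linarith)
        have h6 : γ x * f x = γ x * B x + γ x * D := by rw [hfxB]; ring
        have h7 : 0 ≤ γ x * D := le_of_lt (mul_pos (hγpos x hx0) hD0)
        have h8 : 2 * c₀ * (f x ^ s - B x ^ s) ≤ 2 * c₀ * (s * R ^ (s - 1) * D) := by
          have h8a : s * f x ^ (s - 1) * D ≤ s * R ^ (s - 1) * D := by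
            have hs0 : (0:ℝ) ≤ s := by linarith
            have := mul_le_mul_of_nonneg_left hfs1 hs0
            exact mul_le_mul_of_nonneg_right this hD0.le
          have := hmvt.trans h8a
          nlinarith
        have h9 := hφle x hx0
        have h10 := hmain x hx0
        have hKD : K * D = 2 * c₀ * (s * R ^ (s - 1) * D) + D := by rw [hK]; ring
        show φ x < B' x + δ * (Real.exp (K * x) * K)
        have hDK : δ * (Real.exp (K * x) * K) = K * D := by rw [hD]; ring
        rw [hDK]
        linarith [h6, h7, h8, h9, h10, hKD, hD0]
    -- pass to the limit δ → 0
    refine le_of_forall_pos_le_add fun η hη => ?_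
    have h1 : (0:ℝ) < Real.exp (-(K * T)) := Real.exp_pos _
    set δ : ℝ := min (Real.exp (-(K * T))) (η * Real.exp (-(K * T))) with hδ
    have hδ0 : 0 < δ := lt_min h1 (by positivity)
    have hstep := step δ hδ0 (min_le_left _ _)
    have h2 : δ * Real.exp (K * T) ≤ η := by
      calc δ * Real.exp (K * T) ≤ (η * Real.exp (-(K * T))) * Real.exp (K * T) :=
            mul_le_mul_of_nonneg_right (min_le_right _ _) (Real.exp_pos _).le
        _ = η := by rw [mul_assoc, ← Real.exp_add]; simp
    linarith
  -- conclusion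
  intro t ht
  refine ⟨norm_nonneg _, ?_⟩
  have h1 := hmainB t ht
  have hyt : (0:ℝ) < 1 + t := by linarith
  have hrp : (0:ℝ) < (1 + t) ^ (c₁ - ε) := Real.rpow_pos_of_pos hyt _
  have hW0 : (0:ℝ) < 1 / (lam * (1 + t) ^ (c₁ - ε)) := by positivity
  have h2 : (1 / (lam * (1 + t) ^ (c₁ - ε))) ^ 2 = B t := by
    simp only [hB]
    have e1 : ((1 + t) ^ (c₁ - ε)) ^ 2 = (1 + t) ^ (2 * c) := by
      rw [← Real.rpow_two, ← Real.rpow_mul hyt.le, hc]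
      ring_nf
    have e2 : (1 + t) ^ (-(2 * c)) = (((1 + t) ^ (c₁ - ε)) ^ 2)⁻¹ := by
      rw [e1, Real.rpow_neg hyt.le]
    rw [e2, hm]
    field_simp
  have h3 : ‖u t‖ ^ 2 ≤ (1 / (lam * (1 + t) ^ (c₁ - ε))) ^ 2 := by
    rw [h2]; exact h1
  have h4 := Real.sqrt_le_sqrt h3
  rwa [Real.sqrt_sq (norm_nonneg _), Real.sqrt_sq hW0.le] at h4
end

section
/- Let H be a complex Hilbert space, let u : [0,∞) → H be differentiable and satisfy u'(t) = A(t)(u(t)) + F(t, u(t)) for all t ≥ 0, where for each t, A(t) is a bounded linear operator on H and F(t,·) : H → H. Assume there are constants c₀ > 0 and p > 1 with ‖F(t,x)‖ ≤ c₀‖x‖^p for all t ≥ 0 and x ∈ H. Let c₁ > 0, 0 < q ≤ 1, and assume Re⟪A(t)x, x⟫ ≤ -(c₁/(1+t)^q)‖x‖² for all t ≥ 0 and x ∈ H. Suppose λ > 0 and ν > 0 satisfy c₀/λ^{p-1} + ν ≤ c₁ and (p-1)ν ≥ q, and that ‖u(0)‖ ≤ 1/λ. Then ‖u(t)‖ ≤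 1/(λ·(1+t)^{ν}) for all t ≥ 0. -/
open Set Real

lemma my_rpow_mvt {s R x y : ℝ} (hs : 1 ≤ s) (hx : 0 ≤ x) (hxy : x ≤ y) (hyR : y ≤ R) :
    y ^ s - x ^ s ≤ s * R ^ (s - 1) * (y - x) := by
  rcases hxy.eq_or_lt with rfl | hlt
  · simp
  obtain ⟨c, hc, hceq⟩ := exists_hasDerivAt_eq_slope (fun z => z ^ s) (fun z => s * z ^ (s - 1))
    hlt (by
      intro z _
      exact (Real.continuousAt_rpow_const z s (Or.inr (by linarith))).continuousWithinAt)
    (fun z _ => Real.hasDerivAt_rpow_const (Or.inr hs))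
  have hc0 : 0 ≤ c := le_trans hx hc.1.le
  have hcR : c ≤ R := le_trans hc.2.le hyR
  have hle : c ^ (s - 1) ≤ R ^ (s - 1) := Real.rpow_le_rpow hc0 hcR (by linarith)
  rw [eq_div_iff (by intro h; apply hlt.ne'; linarith : y - x ≠ 0)] at hceq
  rw [← hceq]
  have hyx : 0 ≤ y - x := by linarith
  have h2 : s * c ^ (s - 1) ≤ s * R ^ (s - 1) := by
    apply mul_le_mul_of_nonneg_left hle (by linarith)
  exact mul_le_mul_of_nonneg_right h2 hyx

lemma my_comparison {f f' B B' : ℝ → ℝ} {a b L : ℝ}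
    (hf : ContinuousOn f (Icc a b))
    (hf' : ∀ x ∈ Ico a b, HasDerivWithinAt f (f' x) (Ici x) x)
    (hB : ContinuousOn B (Icc a b))
    (hB' : ∀ x ∈ Ico a b, HasDerivWithinAt B (B' x) (Ici x) x)
    (ha : f a ≤ B a)
    (bound : ∀ x ∈ Ico a b, B x ≤ f x → f' x ≤ B' x + L * (f x - B x)) :
    ∀ x ∈ Icc a b, f x ≤ B x := by
  intro x hx
  have key : ∀ ε > (0:ℝ), f x ≤ B x + ε * Real.exp ((L + 1) * (x - a)) := by
    intro ε hε
    have hexp : ∀ t : ℝ, HasDerivAt (fun t => ε * Real.exp ((L + 1) * (t - a)))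
        (ε * ((L + 1) * Real.exp ((L + 1) * (t - a)))) t := by
      intro t
      have h1 : HasDerivAt (fun t : ℝ => (L + 1) * (t - a)) (L + 1) t := by
        simpa using ((hasDerivAt_id t).sub_const a).const_mul (L + 1)
      have := h1.exp.const_mul ε
      exact this.congr_deriv (by ring)
    refine image_le_of_deriv_right_lt_deriv_boundary'
      (B := fun t => B t + ε * Real.exp ((L + 1) * (t - a)))
      (B' := fun t => B' t + ε * ((L + 1) * Real.exp ((L + 1) * (t - a))))
      hf hf' ?_ ?_ ?_ ?_ hx
    · have h1 : Real.exp ((L + 1) * (a - a)) = 1 := by rw [sub_self, mul_zero, Real.exp_zero]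
      simp only [h1]
      linarith
    · exact hB.add (Continuous.continuousOn (by continuity))
    · exact fun t ht => (hB' t ht).add (hexp t).hasDerivWithinAt
    · intro t ht heq
      have heq' : f t = B t + ε * Real.exp ((L + 1) * (t - a)) := heq
      show f' t < B' t + ε * ((L + 1) * Real.exp ((L + 1) * (t - a)))
      have hpos : 0 < ε * Real.exp ((L + 1) * (t - a)) := by positivity
      have hBf : B t ≤ f t := by linarith
      have := bound t ht hBf
      have hfB : f t - B t = ε * Real.exp ((L + 1) * (t - a)) := by linarith
      rw [hfB] at this
      nlinarith [Real.exp_pos ((L + 1) * (t - a))]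
  have hC : 0 < Real.exp ((L + 1) * (x - a)) := Real.exp_pos _
  refine le_of_forall_pos_le_add fun δ hδ => ?_
  have := key (δ / Real.exp ((L + 1) * (x - a))) (by positivity)
  calc f x ≤ B x + δ / Real.exp ((L + 1) * (x - a)) * Real.exp ((L + 1) * (x - a)) := this
    _ = B x + δ := by field_simp

set_option maxHeartbeats 1000000 in
/-- **Remark 1** (Ramm). If constants `λ, ν > 0` satisfy `c₀/λ^{p-1} + ν ≤ c₁` and
`(p-1)ν ≥ q`, and `‖u 0‖ ≤ 1/λ`, then the solution of `u' = A(t)u + F(t,u)` with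
`Re⟪A(t)x,x⟫ ≤ -(c₁/(1+t)^q)‖x‖²` satisfies `‖u t‖ ≤ 1/(λ(1+t)^ν)` for all `t ≥ 0`. -/
theorem asymptotic_decay_general_lambda_nu
    {H : Type*} [NormedAddCommGroup H] [InnerProductSpace ℂ H] [CompleteSpace H]
    (A : ℝ → H →L[ℂ] H) (F : ℝ → H → H) (u : ℝ → H)
    (hu : ∀ t : ℝ, 0 ≤ t → HasDerivAt u (A t (u t) + F t (u t)) t)
    (c₀ p : ℝ) (hc₀ : 0 < c₀) (hp : 1 < p)
    (hF : ∀ t : ℝ, 0 ≤ t → ∀ x : H, ‖F t x‖ ≤ c₀ * ‖x‖ ^ p)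
    (c₁ q : ℝ) (hc₁ : 0 < c₁) (hq : 0 < q) (hq1 : q ≤ 1)
    (hA : ∀ t : ℝ, 0 ≤ t → ∀ x : H,
      (inner ℂ (A t x) x : ℂ).re ≤ -(c₁ / (1 + t) ^ q) * ‖x‖ ^ 2)
    (lam ν : ℝ) (hlam : 0 < lam) (hν : 0 < ν)
    (hcond : c₀ / lam ^ (p - 1) + ν ≤ c₁)
    (hpν : (p - 1) * ν ≥ q)
    (hu0 : ‖u 0‖ ≤ 1 / lam) :
    ∀ t : ℝ, 0 ≤ t → ‖u t‖ ≤ 1 / (lam * (1 + t) ^ ν) := by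
  intro T hT
  set s : ℝ := (p + 1) / 2 with hs_def
  have hs1 : 1 ≤ s := by rw [hs_def]; linarith
  set f : ℝ → ℝ := fun t => ‖u t‖ ^ 2 with hf_def
  set f' : ℝ → ℝ := fun t => 2 * (inner ℂ (A t (u t) + F t (u t)) (u t) : ℂ).re with hf'_def
  set B : ℝ → ℝ := fun t => (lam ^ 2)⁻¹ * (1 + t) ^ (-(2 * ν)) with hB_def
  set B' : ℝ → ℝ := fun t => (lam ^ 2)⁻¹ * (-(2 * ν) * (1 + t) ^ (-(2 * ν) - 1)) with hB'_def
  -- derivative of f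
  have hfderiv : ∀ t : ℝ, 0 ≤ t → HasDerivAt f (f' t) t := by
    intro t ht
    have h1 : HasDerivAt (fun t => (inner ℂ (u t) (u t) : ℂ))
        ((inner ℂ (u t) (A t (u t) + F t (u t)) : ℂ)
          + (inner ℂ (A t (u t) + F t (u t)) (u t) : ℂ)) t :=
      HasDerivAt.inner ℂ (hu t ht) (hu t ht)
    have h2 := Complex.reCLM.hasFDerivAt.comp_hasDerivAt t h1
    have h3 : (fun t => Complex.reCLM (inner ℂ (u t) (u t) : ℂ)) = f := by
      funext y
      simp only [hf_def, Complex.reCLM_apply, ← RCLike.re_to_complex]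
      exact inner_self_eq_norm_sq (𝕜 := ℂ) (u y)
    have h4 : Complex.reCLM ((inner ℂ (u t) (A t (u t) + F t (u t)) : ℂ)
        + (inner ℂ (A t (u t) + F t (u t)) (u t) : ℂ)) = f' t := by
      simp only [hf'_def, Complex.reCLM_apply, Complex.add_re]
      have hc : (inner ℂ (u t) (A t (u t) + F t (u t)) : ℂ)
          = starRingEnd ℂ (inner ℂ (A t (u t) + F t (u t)) (u t) : ℂ) :=
        (inner_conj_symm _ _).symm
      rw [hc, Complex.conj_re]; ring
    have h2' : HasDerivAt (fun t => Complex.reCLM (inner ℂ (u t) (u t) : ℂ))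
        (Complex.reCLM ((inner ℂ (u t) (A t (u t) + F t (u t)) : ℂ)
          + (inner ℂ (A t (u t) + F t (u t)) (u t) : ℂ))) t := h2
    rw [h3, h4] at h2'
    exact h2'
  -- derivative of B
  have hBderiv : ∀ t : ℝ, 0 ≤ t → HasDerivAt B (B' t) t := by
    intro t ht
    have hτ0 : (0:ℝ) < 1 + t := by linarith
    have h1 : HasDerivAt (fun t : ℝ => 1 + t) 1 t := by
      simpa using (hasDerivAt_id t).const_add 1
    have h2 := (h1.rpow_const (p := -(2 * ν)) (Or.inl hτ0.ne'))
    have h3 := h2.const_mul ((lam ^ 2)⁻¹ : ℝ)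
    simp only [hB_def, hB'_def]
    exact h3.congr_deriv (by ring)
  -- the key differential inequality for f
  have hkey : ∀ t : ℝ, 0 ≤ t →
      f' t ≤ -(2 * (c₁ / (1 + t) ^ q)) * f t + 2 * c₀ * f t ^ s := by
    intro t ht
    have h1 : (inner ℂ (A t (u t)) (u t) : ℂ).re ≤ -(c₁ / (1 + t) ^ q) * ‖u t‖ ^ 2 :=
      hA t ht (u t)
    have h2 : (inner ℂ (F t (u t)) (u t) : ℂ).re ≤ c₀ * ‖u t‖ ^ p * ‖u t‖ := by
      have hre : (inner ℂ (F t (u t)) (u t) : ℂ).re ≤ ‖F t (u t)‖ * ‖u t‖ := by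
        have := re_inner_le_norm (𝕜 := ℂ) (F t (u t)) (u t)
        simpa [RCLike.re_to_complex] using this
      calc (inner ℂ (F t (u t)) (u t) : ℂ).re ≤ ‖F t (u t)‖ * ‖u t‖ := hre
        _ ≤ c₀ * ‖u t‖ ^ p * ‖u t‖ :=
          mul_le_mul_of_nonneg_right (hF t ht (u t)) (norm_nonneg _)
    have h3 : f t ^ s = ‖u t‖ ^ p * ‖u t‖ := by
      have hn : (0:ℝ) ≤ ‖u t‖ := norm_nonneg _
      rcases hn.eq_or_lt with h | h
      · have h0 : ‖u t‖ = 0 := h.symm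
        simp only [hf_def, h0]
        rw [Real.zero_rpow (by linarith : p ≠ 0)]
        norm_num
        exact Real.zero_rpow (by linarith : s ≠ 0)
      · simp only [hf_def]
        rw [← Real.rpow_natCast (‖u t‖) 2, ← Real.rpow_mul hn]
        rw [show ((2:ℕ):ℝ) * s = p + 1 by push_cast [hs_def]; ring]
        rw [Real.rpow_add h, Real.rpow_one]
    have h4 : f' t = 2 * (inner ℂ (A t (u t)) (u t) : ℂ).re
        + 2 * (inner ℂ (F t (u t)) (u t) : ℂ).re := by
      simp only [hf'_def, inner_add_left, Complex.add_re]; ring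
    have hft : f t = ‖u t‖ ^ 2 := rfl
    rw [h4, h3, hft]
    linarith
  -- G(B t) ≤ B' t
  have hGB : ∀ t : ℝ, 0 ≤ t →
      -(2 * (c₁ / (1 + t) ^ q)) * B t + 2 * c₀ * B t ^ s ≤ B' t := by
    intro t ht
    have hτ : (1:ℝ) ≤ 1 + t := by linarith
    have hτ0 : (0:ℝ) < 1 + t := by linarith
    set X : ℝ := (1 + t) ^ (-(2 * ν) - q) with hX_def
    set X' : ℝ := (1 + t) ^ (-(2 * ν) * s) with hX'_def
    set Y : ℝ := (1 + t) ^ (-(2 * ν) - 1) with hY_def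
    have hXpos : 0 < X := Real.rpow_pos_of_pos hτ0 _
    have hYpos : 0 < Y := Real.rpow_pos_of_pos hτ0 _
    have hYX : Y ≤ X := Real.rpow_le_rpow_of_exponent_le hτ (by linarith)
    have hX'X : X' ≤ X := Real.rpow_le_rpow_of_exponent_le hτ
      (by rw [hs_def]; nlinarith [hpν])
    have hsplit : X = (1 + t) ^ (-(2 * ν)) * (1 + t) ^ (-q) := by
      rw [hX_def, ← Real.rpow_add hτ0]; ring_nf
    have eq1 : -(2 * (c₁ / (1 + t) ^ q)) * B t = -(2 * c₁) * ((lam ^ 2)⁻¹ * X) := by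
      rw [hsplit, div_eq_mul_inv, ← Real.rpow_neg hτ0.le]
      simp only [hB_def]
      ring
    have hBts : B t ^ s = ((lam ^ 2)⁻¹) ^ s * X' := by
      simp only [hB_def, hX'_def]
      rw [Real.mul_rpow (by positivity) (by positivity), ← Real.rpow_mul hτ0.le]
    have e1 : ((lam ^ 2)⁻¹ : ℝ) ^ s = lam ^ (-(2 * s)) := by
      rw [show ((lam:ℝ) ^ 2)⁻¹ = lam ^ (-(2:ℝ)) by
            rw [Real.rpow_neg hlam.le]
            rw [show (lam:ℝ) ^ (2:ℝ) = lam ^ 2 by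
                  exact_mod_cast Real.rpow_natCast lam 2]]
      rw [← Real.rpow_mul hlam.le]
      norm_num
    have e2 : (lam:ℝ) ^ (-(2 * s)) = (lam ^ (p - 1))⁻¹ * (lam ^ 2)⁻¹ := by
      rw [show -(2 * s) = -(p - 1) + -(2:ℝ) by rw [hs_def]; ring]
      rw [Real.rpow_add hlam, Real.rpow_neg hlam.le, Real.rpow_neg hlam.le]
      rw [show (lam:ℝ) ^ (2:ℝ) = lam ^ 2 by exact_mod_cast Real.rpow_natCast lam 2]
    have hK : c₀ * ((lam ^ 2)⁻¹) ^ s = (c₀ / lam ^ (p - 1)) * (lam ^ 2)⁻¹ := by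
      rw [e1, e2]; field_simp
    have eq3 : B' t = (lam ^ 2)⁻¹ * (-(2 * ν)) * Y := by
      simp only [hB'_def, hY_def]; ring
    have hM : (0:ℝ) < (lam ^ 2)⁻¹ := by positivity
    have hc0' : (0:ℝ) ≤ c₀ / lam ^ (p - 1) := by positivity
    calc -(2 * (c₁ / (1 + t) ^ q)) * B t + 2 * c₀ * B t ^ s
        = -(2 * c₁) * ((lam ^ 2)⁻¹ * X) + 2 * (c₀ / lam ^ (p - 1)) * ((lam ^ 2)⁻¹ * X') := by
          rw [hBts, eq1]; linear_combination (2 * X') * hK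
      _ ≤ (lam ^ 2)⁻¹ * (-(2 * ν)) * Y := by
          nlinarith [mul_le_mul_of_nonneg_left hX'X
              (by positivity : (0:ℝ) ≤ 2 * (c₀ / lam ^ (p - 1)) * (lam ^ 2)⁻¹),
            mul_le_mul_of_nonneg_left hYX (by positivity : (0:ℝ) ≤ 2 * ν * (lam ^ 2)⁻¹),
            mul_le_mul_of_nonneg_right
              (by linarith : c₀ / lam ^ (p - 1) ≤ c₁ - ν)
              (le_of_lt (mul_pos hM hXpos))]
      _ = B' t := eq3.symm
  -- continuity
  have hfcont : ContinuousOn f (Icc 0 T) := fun t ht =>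
    ((hfderiv t ht.1).continuousAt).continuousWithinAt
  have hBcont : ContinuousOn B (Icc 0 T) := fun t ht =>
    ((hBderiv t ht.1).continuousAt).continuousWithinAt
  -- max of f on [0, T]
  obtain ⟨z, hz, hmax⟩ := (isCompact_Icc : IsCompact (Icc (0:ℝ) T)).exists_isMaxOn
    (nonempty_Icc.2 hT) hfcont
  rw [isMaxOn_iff] at hmax
  set R : ℝ := f z with hR_def
  -- comparison
  have hcomp := my_comparison (L := 2 * c₀ * (s * R ^ (s - 1)))
    hfcont (fun x hx => (hfderiv x hx.1).hasDerivWithinAt)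
    hBcont (fun x hx => (hBderiv x hx.1).hasDerivWithinAt)
    (by -- f 0 ≤ B 0
      simp only [hf_def, hB_def]
      norm_num
      calc ‖u 0‖ ^ 2 ≤ (1 / lam) ^ 2 := by
            have := pow_le_pow_left₀ (norm_nonneg (u 0)) hu0 2
            simpa using this
        _ = (lam ^ 2)⁻¹ := by field_simp)
    (by -- bound
      intro x hx hBf
      have hx0 : 0 ≤ x := hx.1
      have hfB := hkey x hx0
      have hBx0 : (0:ℝ) ≤ B x := by
        simp only [hB_def]
        positivity
      have hfR : f x ≤ R := hmax x ⟨hx.1, hx.2.le⟩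
      have hmvt := my_rpow_mvt hs1 hBx0 hBf hfR
      have hGBx := hGB x hx0
      have hq0 : (0:ℝ) ≤ c₁ / (1 + x) ^ q := by positivity
      nlinarith [mul_nonneg hq0 (sub_nonneg.2 hBf),
        mul_le_mul_of_nonneg_left hmvt (by linarith : (0:ℝ) ≤ 2 * c₀)])
  have hfT : f T ≤ B T := hcomp T ⟨hT, le_refl T⟩
  -- conclude
  have hτ0 : (0:ℝ) < 1 + T := by linarith
  have hr : (0:ℝ) < lam * (1 + T) ^ ν := by positivity
  have hr2 : (1 / (lam * (1 + T) ^ ν)) ^ 2 = B T := by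
    have e1 : ((1 + T) ^ ν) ^ 2 = (1 + T) ^ (2 * ν) := by
      rw [← Real.rpow_natCast ((1 + T) ^ ν) 2, ← Real.rpow_mul hτ0.le]
      norm_num [mul_comm]
    simp only [hB_def]
    rw [Real.rpow_neg hτ0.le, ← e1]
    field_simp
  have hfT' : ‖u T‖ ^ 2 ≤ (1 / (lam * (1 + T) ^ ν)) ^ 2 := by
    rw [hr2]; exact hfT
  exact (pow_le_pow_iff_left₀ (norm_nonneg (u T)) (by positivity) (by norm_num)).1 hfT'
end

section
/- Let H be a complex Hilbert space, for each t ≥ 0 let A(t) be a bounded linear operator on H and F(t,·) : H → H, with constants c₀ > 0, p > 1 such that ‖F(t,x)‖ ≤ c₀‖x‖^p for all t ≥ 0, x ∈ H, and with a constant k > 0 such that Re⟪A(t)x, x⟫ ≤ -k‖x‖² for all t ≥ 0, x ∈ H. Then the zero solution of u' = A(t)u + F(t,u) is asymptotically stable in the Lyapunov sense: for every ε > 0 there exists δ > 0 such that every differentiable u : [0,∞) → H satisfying u'(t) = A(t)(u(t)) + F(t,u(t)) for all t ≥ 0 with ‖u(0)‖ ≤ δ satisfies sup_{t≥0} ‖u(t)‖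 ≤ ε and lim_{t→∞} ‖u(t)‖ = 0. -/
/-- Asymptotic stability (Lyapunov) of the zero solution of `u' = A(t)u + F(t,u)`
when `Re⟪A(t)x,x⟫ ≤ -k‖x‖²`, `k > 0`, and `‖F(t,x)‖ ≤ c₀‖x‖^p`, `p > 1`. -/
theorem zero_solution_asymptotically_stable
    {H : Type*} [NormedAddCommGroup H] [InnerProductSpace ℂ H] [CompleteSpace H]
    (A : ℝ → H →L[ℂ] H) (F : ℝ → H → H)
    (c₀ p : ℝ) (hc₀ : 0 < c₀) (hp : 1 < p)
    (hF : ∀ t : ℝ, 0 ≤ t → ∀ x : H, ‖F t x‖ ≤ c₀ * ‖x‖ ^ p)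
    (k : ℝ) (hk : 0 < k)
    (hA : ∀ t : ℝ, 0 ≤ t → ∀ x : H, (inner ℂ (A t x) x : ℂ).re ≤ -k * ‖x‖ ^ 2) :
    ∀ ε : ℝ, 0 < ε → ∃ δ : ℝ, 0 < δ ∧
      ∀ u : ℝ → H, (∀ t : ℝ, 0 ≤ t → HasDerivAt u (A t (u t) + F t (u t)) t) →
        ‖u 0‖ ≤ δ →
        (∀ t : ℝ, 0 ≤ t → ‖u t‖ ≤ ε) ∧
        Filter.Tendsto (fun t : ℝ => ‖u t‖) Filter.atTop (nhds 0) := by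
  intro ε hε
  set q : ℝ := p - 1 with hqdef
  have hq0 : 0 < q := by simp [hqdef]; linarith
  have hkc : 0 < k / (2 * c₀) := by positivity
  set r : ℝ := min ε ((k / (2 * c₀)) ^ q⁻¹) with hrdef
  have hr0 : 0 < r := lt_min hε (Real.rpow_pos_of_pos hkc _)
  have hrε : r ≤ ε := min_le_left _ _
  have hrk : c₀ * r ^ q ≤ k / 2 := by
    have h1 : r ^ q ≤ ((k / (2 * c₀)) ^ q⁻¹) ^ q :=
      Real.rpow_le_rpow hr0.le (min_le_right _ _) hq0.le
    rw [Real.rpow_inv_rpow hkc.le hq0.ne'] at h1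
    have := mul_le_mul_of_nonneg_left h1 hc₀.le
    calc c₀ * r ^ q ≤ c₀ * (k / (2 * c₀)) := this
      _ = k / 2 := by field_simp
  refine ⟨r / 2, by positivity, fun u hu hu0 => ?_⟩
  -- the squared norm and its derivative
  set g : ℝ → ℝ := fun t => ((inner ℂ (u t) (u t) : ℂ)).re with hgdef
  have hgnorm : ∀ t, g t = ‖u t‖ ^ 2 := fun t => by
    show ((inner ℂ (u t) (u t) : ℂ)).re = ‖u t‖ ^ 2
    rw [← RCLike.re_to_complex]
    exact inner_self_eq_norm_sq (𝕜 := ℂ) (u t)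
  set g' : ℝ → ℝ := fun t => 2 * (inner ℂ (A t (u t) + F t (u t)) (u t) : ℂ).re with hg'def
  have hg : ∀ t, 0 ≤ t → HasDerivAt g (g' t) t := by
    intro t ht
    have h := (hu t ht).inner ℂ (hu t ht)
    have h2 := Complex.reCLM.hasFDerivAt.comp_hasDerivAt t h
    have h3 : HasDerivAt g _ t := h2
    convert h3 using 1
    simp only [hg'def, Complex.reCLM_apply, Complex.add_re]
    rw [← inner_conj_symm (u t) (A t (u t) + F t (u t)), Complex.conj_re]
    ring
  -- derivative bound when the norm is at most r
  have hbound : ∀ t, 0 ≤ t → ‖u t‖ ≤ r → g' t ≤ -k * g t + 0 := by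
    intro t ht hur
    have h1 : (inner ℂ (A t (u t)) (u t) : ℂ).re ≤ -k * ‖u t‖ ^ 2 := hA t ht (u t)
    have h2 : (inner ℂ (F t (u t)) (u t) : ℂ).re ≤ c₀ * ‖u t‖ ^ p * ‖u t‖ := by
      calc (inner ℂ (F t (u t)) (u t) : ℂ).re ≤ ‖(inner ℂ (F t (u t)) (u t) : ℂ)‖ :=
            Complex.re_le_norm _
        _ = ‖(inner ℂ (F t (u t)) (u t) : ℂ)‖ := rfl
        _ ≤ ‖F t (u t)‖ * ‖u t‖ := norm_inner_le_norm _ _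
        _ ≤ c₀ * ‖u t‖ ^ p * ‖u t‖ :=
            mul_le_mul_of_nonneg_right (hF t ht (u t)) (norm_nonneg _)
    have h3 : c₀ * ‖u t‖ ^ p * ‖u t‖ ≤ k / 2 * ‖u t‖ ^ 2 := by
      rcases eq_or_lt_of_le (norm_nonneg (u t)) with h0 | h0
      · rw [← h0, Real.zero_rpow (by positivity : p ≠ 0)]
        simp
      · have hsplit : ‖u t‖ ^ p = ‖u t‖ ^ q * ‖u t‖ := by
          have h' : ‖u t‖ ^ (q + 1) = ‖u t‖ ^ q * ‖u t‖ ^ (1:ℝ) := Real.rpow_add h0 q 1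
          rw [Real.rpow_one] at h'
          rw [show p = q + 1 by simp [hqdef], h']
        have hq1 : ‖u t‖ ^ q ≤ r ^ q := Real.rpow_le_rpow (norm_nonneg _) hur hq0.le
        calc c₀ * ‖u t‖ ^ p * ‖u t‖ = (c₀ * ‖u t‖ ^ q) * ‖u t‖ ^ 2 := by
              rw [hsplit]; ring
          _ ≤ (c₀ * r ^ q) * ‖u t‖ ^ 2 := by
              apply mul_le_mul_of_nonneg_right _ (by positivity)
              exact mul_le_mul_of_nonneg_left hq1 hc₀.le
          _ ≤ k / 2 * ‖u t‖ ^ 2 := mul_le_mul_of_nonneg_right hrk (by positivity)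
    have : (inner ℂ (A t (u t) + F t (u t)) (u t) : ℂ).re
        ≤ -k * ‖u t‖ ^ 2 + k / 2 * ‖u t‖ ^ 2 := by
      rw [inner_add_left, Complex.add_re]
      exact add_le_add h1 (h2.trans h3)
    simp only [hg'def, hgnorm t]
    nlinarith [this, sq_nonneg ‖u t‖, hk]
  -- Grönwall estimate
  have gron : ∀ b, 0 ≤ b → (∀ s ∈ Set.Ico (0:ℝ) b, ‖u s‖ ≤ r) →
      ∀ x ∈ Set.Icc (0:ℝ) b, g x ≤ (r / 2) ^ 2 * Real.exp (-k * x) := by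
    intro b hb hsmall x hx
    have := le_gronwallBound_of_liminf_deriv_right_le (f := g) (f' := g')
      (δ := (r / 2) ^ 2) (K := -k) (ε := 0) (a := 0) (b := b)
      (fun s hs => ((hg s hs.1).continuousAt).continuousWithinAt)
      (fun s hs ρ hρ => by
        have h := ((hg s hs.1).hasDerivWithinAt.liminf_right_slope_le hρ)
        exact h.mono fun z hz => by rwa [slope_def_field, div_eq_inv_mul] at hz)
      (by
        rw [hgnorm 0]
        exact pow_le_pow_left₀ (norm_nonneg _) hu0 2)
      (fun s hs => hbound s hs.1 (hsmall s hs)) x hx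
    rwa [sub_zero, gronwallBound_ε0] at this
  -- bootstrap: the norm stays below r
  have hsmall : ∀ t, 0 ≤ t → ‖u t‖ ≤ r := by
    by_contra hcon
    push_neg at hcon
    obtain ⟨t₀, ht₀, hrt₀⟩ := hcon
    set B : Set ℝ := {t | t ∈ Set.Icc 0 t₀ ∧ r < ‖u t‖} with hBdef
    have ht₀B : t₀ ∈ B := ⟨⟨ht₀, le_refl _⟩, hrt₀⟩
    have hBne : B.Nonempty := ⟨t₀, ht₀B⟩
    have hBbdd : BddBelow B := ⟨0, fun x hx => hx.1.1⟩
    set c : ℝ := sInf B with hcdef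
    have hc0 : 0 ≤ c := le_csInf hBne fun x hx => hx.1.1
    have hct₀ : c ≤ t₀ := csInf_le hBbdd ht₀B
    have hclos : c ∈ closure B := csInf_mem_closure hBne hBbdd
    have hrc : r ≤ ‖u c‖ := by
      have hne2 : (nhdsWithin c B).NeBot := mem_closure_iff_nhdsWithin_neBot.mp hclos
      have hcu : Filter.Tendsto (fun t => ‖u t‖) (nhdsWithin c B) (nhds ‖u c‖) :=
        ((hu c hc0).continuousAt.norm).continuousWithinAt
      exact ge_of_tendsto hcu (eventually_mem_nhdsWithin.mono fun t ht => ht.2.le)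
    have hIco : ∀ s ∈ Set.Ico (0:ℝ) c, ‖u s‖ ≤ r := by
      intro s hs
      by_contra h
      push_neg at h
      have hsB : s ∈ B := ⟨⟨hs.1, hs.2.le.trans hct₀⟩, h⟩
      exact absurd (csInf_le hBbdd hsB) (not_le.mpr hs.2)
    have hgc : g c ≤ (r / 2) ^ 2 * Real.exp (-k * c) :=
      gron c hc0 hIco c ⟨hc0, le_refl _⟩
    have hexp : Real.exp (-k * c) ≤ 1 := Real.exp_le_one_iff.mpr (by nlinarith)
    have hsq : ‖u c‖ ^ 2 ≤ (r / 2) ^ 2 := by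
      rw [← hgnorm c]
      calc g c ≤ (r / 2) ^ 2 * Real.exp (-k * c) := hgc
        _ ≤ (r / 2) ^ 2 * 1 := mul_le_mul_of_nonneg_left hexp (by positivity)
        _ = (r / 2) ^ 2 := mul_one _
    have : ‖u c‖ ≤ r / 2 :=
      (pow_le_pow_iff_left₀ (norm_nonneg _) (by positivity) two_ne_zero).mp hsq
    linarith
  -- exponential decay
  have hdecay : ∀ t, 0 ≤ t → ‖u t‖ ≤ r / 2 * Real.exp (-(k / 2) * t) := by
    intro t ht
    have hgt : g t ≤ (r / 2) ^ 2 * Real.exp (-k * t) :=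
      gron t ht (fun s hs => hsmall s hs.1) t ⟨ht, le_refl _⟩
    have heq : (r / 2) ^ 2 * Real.exp (-k * t) = (r / 2 * Real.exp (-(k / 2) * t)) ^ 2 := by
      rw [mul_pow, sq (Real.exp _), ← Real.exp_add,
        show -(k / 2) * t + -(k / 2) * t = -k * t by ring]
    have hsq : ‖u t‖ ^ 2 ≤ (r / 2 * Real.exp (-(k / 2) * t)) ^ 2 := by
      rw [← hgnorm t, ← heq]; exact hgt
    exact (pow_le_pow_iff_left₀ (norm_nonneg _) (by positivity) two_ne_zero).mp hsq
  refine ⟨fun t ht => (hsmall t ht).trans hrε, ?_⟩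
  have hlim : Filter.Tendsto (fun t : ℝ => r / 2 * Real.exp (-(k / 2) * t))
      Filter.atTop (nhds 0) := by
    have h1 : Filter.Tendsto (fun t : ℝ => -(k / 2) * t) Filter.atTop Filter.atBot :=
      Filter.Tendsto.const_mul_atTop_of_neg (by linarith) Filter.tendsto_id
    have h2 := Real.tendsto_exp_atBot.comp h1
    simpa using h2.const_mul (r / 2)
  apply squeeze_zero' (Filter.Eventually.of_forall fun t => norm_nonneg _)
    ((Filter.eventually_ge_atTop 0).mono fun t ht => hdecay t ht) hlim
end

section
/- Let H be a complex Hilbert space, let u : [0,∞) → H be differentiable and satisfy u'(t) = A(t)(u(t)) + F(t, u(t)) for all t ≥ 0, where each A(t) is a bounded linear operator on H with Re⟪A(t)x, x⟫ ≤ -k‖x‖² for all t ≥ 0, x ∈ H, for some constant k > 0, and ‖F(t,x)‖ ≤ c₀‖x‖^p for all t ≥ 0, x ∈ H, with constants c₀ > 0, p > 1. Let ε ∈ (0, k) and suppose u(0) ≠ 0 and the smallness condition on the nonlinearity c₀ ≤ ε/‖u(0)‖^{p-1} holds. Then ‖u(t)‖ ≤ ‖u(0)‖·e^{-(k-ε)t}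 for all t ≥ 0; in particular lim_{t→∞}‖u(t)‖ = 0 even though ‖u(0)‖ is not assumed small. -/
/-- Variant of Theorem 1.2: smallness of `‖u 0‖` replaced by smallness of `c₀`.
If `ε ∈ (0,k)`, `u 0 ≠ 0` and `c₀ ≤ ε/‖u 0‖^{p-1}`, then
`‖u t‖ ≤ ‖u 0‖ e^{-(k-ε)t}` for all `t ≥ 0`, and in particular `‖u t‖ → 0`. -/
theorem decay_for_small_nonlinearity
    {H : Type*} [NormedAddCommGroup H] [InnerProductSpace ℂ H] [CompleteSpace H]
    (A : ℝ → H →L[ℂ] H) (F : ℝ → H → H) (u : ℝ → H)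
    (hu : ∀ t : ℝ, 0 ≤ t → HasDerivAt u (A t (u t) + F t (u t)) t)
    (c₀ p : ℝ) (hc₀ : 0 < c₀) (hp : 1 < p)
    (hF : ∀ t : ℝ, 0 ≤ t → ∀ x : H, ‖F t x‖ ≤ c₀ * ‖x‖ ^ p)
    (k : ℝ) (hk : 0 < k)
    (hA : ∀ t : ℝ, 0 ≤ t → ∀ x : H, (inner ℂ (A t x) x : ℂ).re ≤ -k * ‖x‖ ^ 2)
    (ε : ℝ) (hε : ε ∈ Set.Ioo 0 k)
    (hu0 : u 0 ≠ 0)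
    (hsmall : c₀ ≤ ε / ‖u 0‖ ^ (p - 1)) :
    (∀ t : ℝ, 0 ≤ t → ‖u t‖ ≤ ‖u 0‖ * Real.exp (-(k - ε) * t)) ∧
    Filter.Tendsto (fun t : ℝ => ‖u t‖) Filter.atTop (nhds 0) := by
  obtain ⟨hε0, hεk⟩ := hε
  set B₀ : ℝ := ‖u 0‖ with hB₀
  have hB₀pos : 0 < B₀ := norm_pos_iff.mpr hu0
  set w : ℝ → H := fun t => A t (u t) + F t (u t) with hw
  set g : ℝ → ℝ := fun t => ‖u t‖ ^ 2 * Real.exp (2 * (k - ε) * t) with hgdef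
  set g' : ℝ → ℝ := fun t =>
    (2 * (inner ℂ (w t) (u t) : ℂ).re + 2 * (k - ε) * ‖u t‖ ^ 2) * Real.exp (2 * (k - ε) * t)
    with hg'def
  -- c₀ * B₀ ^ (p-1) ≤ ε
  have hc₀B : c₀ * B₀ ^ (p - 1) ≤ ε := by
    have hBp : (0:ℝ) < B₀ ^ (p - 1) := Real.rpow_pos_of_pos hB₀pos _
    rw [div_eq_mul_inv] at hsmall
    calc c₀ * B₀ ^ (p - 1) ≤ ε * (B₀ ^ (p - 1))⁻¹ * B₀ ^ (p - 1) :=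
          mul_le_mul_of_nonneg_right hsmall hBp.le
      _ = ε := by field_simp
  -- the basic differential inequality
  have key : ∀ t : ℝ, 0 ≤ t →
      (inner ℂ (w t) (u t) : ℂ).re ≤ -k * ‖u t‖ ^ 2 + c₀ * ‖u t‖ ^ (p - 1) * ‖u t‖ ^ 2 := by
    intro t ht
    have h1 : (inner ℂ (w t) (u t) : ℂ).re
        = (inner ℂ (A t (u t)) (u t) : ℂ).re + (inner ℂ (F t (u t)) (u t) : ℂ).re := by
      rw [hw]; simp [inner_add_left]
    have h2 : (inner ℂ (F t (u t)) (u t) : ℂ).re ≤ c₀ * ‖u t‖ ^ (p - 1) * ‖u t‖ ^ 2 := by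
      rcases eq_or_ne (u t) 0 with h | h
      · simp [h]
      · have hpos : 0 < ‖u t‖ := norm_pos_iff.mpr h
        have hre := Complex.re_le_norm (inner ℂ (F t (u t)) (u t) : ℂ)
        have habs : ‖(inner ℂ (F t (u t)) (u t) : ℂ)‖ ≤ ‖F t (u t)‖ * ‖u t‖ := by
          simpa using norm_inner_le_norm (𝕜 := ℂ) (F t (u t)) (u t)
        have hFle : ‖F t (u t)‖ * ‖u t‖ ≤ c₀ * ‖u t‖ ^ p * ‖u t‖ :=
          mul_le_mul_of_nonneg_right (hF t ht (u t)) (norm_nonneg _)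
        have hsplit : ‖u t‖ ^ (p - 1) = ‖u t‖ ^ p / ‖u t‖ := by
          rw [Real.rpow_sub hpos, Real.rpow_one]
        have hrw : c₀ * ‖u t‖ ^ p * ‖u t‖ = c₀ * ‖u t‖ ^ (p - 1) * ‖u t‖ ^ 2 := by
          rw [hsplit, sq]
          field_simp
        linarith
    have h3 := hA t ht (u t)
    linarith
  -- strict inequality when `0 < ‖u t‖ < B₀`
  have keystrict : ∀ t : ℝ, 0 ≤ t → u t ≠ 0 → ‖u t‖ < B₀ →
      (inner ℂ (w t) (u t) : ℂ).re < (ε - k) * ‖u t‖ ^ 2 := by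
    intro t ht hne hlt
    have hpos : 0 < ‖u t‖ := norm_pos_iff.mpr hne
    have h1 : c₀ * ‖u t‖ ^ (p - 1) < c₀ * B₀ ^ (p - 1) := by
      have := Real.rpow_lt_rpow (norm_nonneg (u t)) hlt (by linarith : (0:ℝ) < p - 1)
      exact (mul_lt_mul_iff_right₀ hc₀).mpr this
    have h2 : c₀ * ‖u t‖ ^ (p - 1) * ‖u t‖ ^ 2 < ε * ‖u t‖ ^ 2 := by
      have hsq : (0:ℝ) < ‖u t‖ ^ 2 := by positivity
      have : c₀ * ‖u t‖ ^ (p - 1) < ε := lt_of_lt_of_le h1 hc₀B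
      exact (mul_lt_mul_iff_left₀ hsq).mpr this
    have := key t ht
    nlinarith
  -- nonstrict inequality when `‖u t‖ ≤ B₀`
  have keyle : ∀ t : ℝ, 0 ≤ t → ‖u t‖ ≤ B₀ →
      (inner ℂ (w t) (u t) : ℂ).re ≤ (ε - k) * ‖u t‖ ^ 2 := by
    intro t ht hle
    have h1 : c₀ * ‖u t‖ ^ (p - 1) ≤ ε := by
      have := Real.rpow_le_rpow (norm_nonneg (u t)) hle (by linarith : (0:ℝ) ≤ p - 1)
      calc c₀ * ‖u t‖ ^ (p - 1) ≤ c₀ * B₀ ^ (p - 1) :=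
            mul_le_mul_of_nonneg_left this hc₀.le
        _ ≤ ε := hc₀B
    have h2 : c₀ * ‖u t‖ ^ (p - 1) * ‖u t‖ ^ 2 ≤ ε * ‖u t‖ ^ 2 := by
      have hsq : (0:ℝ) ≤ ‖u t‖ ^ 2 := by positivity
      exact mul_le_mul_of_nonneg_right h1 hsq
    have := key t ht
    nlinarith
  -- derivative of g
  have hg : ∀ t : ℝ, 0 ≤ t → HasDerivAt g (g' t) t := by
    intro t ht
    have hinner : HasDerivAt (fun s => (inner ℂ (u s) (u s) : ℂ))
        ((inner ℂ (u t) (w t) : ℂ) + (inner ℂ (w t) (u t) : ℂ)) t :=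
      HasDerivAt.inner ℂ (hu t ht) (hu t ht)
    have hre : HasDerivAt (fun s => ((inner ℂ (u s) (u s) : ℂ)).re)
        (((inner ℂ (u t) (w t) : ℂ) + (inner ℂ (w t) (u t) : ℂ)).re) t :=
      Complex.reCLM.hasFDerivAt.comp_hasDerivAt t hinner
    have hre' : HasDerivAt (fun s => ‖u s‖ ^ 2) (2 * (inner ℂ (w t) (u t) : ℂ).re) t := by
      have hfun : (fun s => ((inner ℂ (u s) (u s) : ℂ)).re) = fun s => ‖u s‖ ^ 2 := by
        funext s
        exact inner_self_eq_norm_sq (𝕜 := ℂ) (u s)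
      have hval : ((inner ℂ (u t) (w t) : ℂ) + (inner ℂ (w t) (u t) : ℂ)).re
          = 2 * (inner ℂ (w t) (u t) : ℂ).re := by
        rw [Complex.add_re, ← inner_conj_symm (u t) (w t), Complex.conj_re]
        ring
      rw [← hfun, ← hval]
      exact hre
    have hexp : HasDerivAt (fun s : ℝ => Real.exp (2 * (k - ε) * s))
        (Real.exp (2 * (k - ε) * t) * (2 * (k - ε))) t := by
      simpa using ((hasDerivAt_id t).const_mul (2 * (k - ε))).exp
    have := hre'.mul hexp
    refine this.congr_deriv ?_
    rw [hg'def]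
    ring
  -- the fencing argument: for every small η, `g t ≤ B₀^2 + η t`
  have fence : ∀ η : ℝ, 0 < η → η ≤ 2 * (k - ε) * B₀ ^ 2 →
      ∀ t : ℝ, 0 ≤ t → g t ≤ B₀ ^ 2 + η * t := by
    intro η hη hη2 t ht
    have hcont : ContinuousOn g (Set.Icc 0 t) := by
      intro x hx
      exact ((((hu x hx.1).continuousAt.norm.pow 2).mul
        ((Real.continuous_exp.comp (continuous_const.mul continuous_id)).continuousAt)
        ).continuousWithinAt)
    have hderiv : ∀ x ∈ Set.Ico (0:ℝ) t, HasDerivWithinAt g (g' x) (Set.Ici x) x :=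
      fun x hx => (hg x hx.1).hasDerivWithinAt
    have ha : g 0 ≤ B₀ ^ 2 + η * 0 := by simp [hgdef, hB₀]
    have hB : ∀ x : ℝ, HasDerivAt (fun y => B₀ ^ 2 + η * y) η x := fun x => by
      simpa using ((hasDerivAt_id x).const_mul η).const_add (B₀ ^ 2)
    have hbound : ∀ x ∈ Set.Ico (0:ℝ) t, g x = B₀ ^ 2 + η * x → g' x < η := by
      intro x hx htouch
      rcases eq_or_lt_of_le hx.1 with h0 | h0
      · -- x = 0
        subst h0
        have hle0 : g' 0 ≤ 0 := by
          have h := keyle 0 le_rfl le_rfl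
          have hexp : (0:ℝ) < Real.exp (2 * (k - ε) * 0) := Real.exp_pos _
          rw [hg'def]
          have h2 : 2 * (inner ℂ (w 0) (u 0) : ℂ).re + 2 * (k - ε) * ‖u 0‖ ^ 2 ≤ 0 := by
            nlinarith
          exact mul_nonpos_of_nonpos_of_nonneg h2 hexp.le
        linarith
      · -- x > 0
        have htouch' : ‖u x‖ ^ 2 * Real.exp (2 * (k - ε) * x) = B₀ ^ 2 + η * x := htouch
        have hexp : (0:ℝ) < Real.exp (2 * (k - ε) * x) := Real.exp_pos _
        have hne : u x ≠ 0 := by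
          intro h
          simp only [h, norm_zero] at htouch'
          have h1 := mul_pos hη h0
          have h2 := pow_pos hB₀pos 2
          nlinarith [htouch']
        have hy : (0:ℝ) < 2 * (k - ε) * x := mul_pos (by linarith) h0
        have he := Real.add_one_lt_exp hy.ne'
        have hstep1 : B₀ ^ 2 + η * x < B₀ ^ 2 * Real.exp (2 * (k - ε) * x) := by
          have ha1 : (0:ℝ) < B₀ ^ 2 * (Real.exp (2 * (k - ε) * x) - (2 * (k - ε) * x + 1)) :=
            mul_pos (pow_pos hB₀pos 2) (by linarith)
          have ha2 : (0:ℝ) ≤ (2 * (k - ε) * B₀ ^ 2 - η) * x :=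
            mul_nonneg (sub_nonneg.mpr hη2) h0.le
          nlinarith [ha1, ha2]
        have hsq : ‖u x‖ ^ 2 < B₀ ^ 2 := by
          have h' : ‖u x‖ ^ 2 * Real.exp (2 * (k - ε) * x)
              < B₀ ^ 2 * Real.exp (2 * (k - ε) * x) := by rw [htouch']; exact hstep1
          exact (mul_lt_mul_iff_left₀ hexp).mp h'
        have hlt : ‖u x‖ < B₀ := lt_of_pow_lt_pow_left₀ 2 hB₀pos.le hsq
        have hstrict := keystrict x hx.1 hne hlt
        have h1 : 2 * (inner ℂ (w x) (u x) : ℂ).re + 2 * (k - ε) * ‖u x‖ ^ 2 < 0 := by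
          linarith
        show (2 * (inner ℂ (w x) (u x) : ℂ).re + 2 * (k - ε) * ‖u x‖ ^ 2) *
          Real.exp (2 * (k - ε) * x) < η
        have := mul_neg_of_neg_of_pos h1 hexp
        linarith
    have main := image_le_of_deriv_right_lt_deriv_boundary hcont hderiv ha hB hbound
    exact main ⟨ht, le_rfl⟩
  -- pass to the limit η → 0
  have gbound : ∀ t : ℝ, 0 ≤ t → g t ≤ B₀ ^ 2 := by
    intro t ht
    refine le_of_forall_pos_le_add fun δ hδ => ?_
    set η : ℝ := min (δ / (t + 1)) (2 * (k - ε) * B₀ ^ 2) with hηdef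
    have hη : 0 < η := by
      apply lt_min
      · positivity
      · exact mul_pos (by linarith) (pow_pos hB₀pos 2)
    have hη2 : η ≤ 2 * (k - ε) * B₀ ^ 2 := min_le_right _ _
    have hmain := fence η hη hη2 t ht
    have hle : η * t ≤ δ := by
      have h1 : η * t ≤ δ / (t + 1) * t :=
        mul_le_mul_of_nonneg_right (min_le_left _ _) ht
      have h2 : δ / (t + 1) * t ≤ δ := by
        rw [div_mul_eq_mul_div, div_le_iff₀ (by linarith : (0:ℝ) < t + 1)]
        nlinarith
      linarith
    linarith
  -- final norm bound
  have normbound : ∀ t : ℝ, 0 ≤ t → ‖u t‖ ≤ B₀ * Real.exp (-(k - ε) * t) := by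
    intro t ht
    have hE : (0:ℝ) < Real.exp (2 * (k - ε) * t) := Real.exp_pos _
    have h2 : (B₀ * Real.exp (-(k - ε) * t)) ^ 2 * Real.exp (2 * (k - ε) * t) = B₀ ^ 2 := by
      have harg : -(k - ε) * t + (-(k - ε) * t + 2 * (k - ε) * t) = 0 := by ring
      calc (B₀ * Real.exp (-(k - ε) * t)) ^ 2 * Real.exp (2 * (k - ε) * t)
          = B₀ ^ 2 * (Real.exp (-(k - ε) * t) *
            (Real.exp (-(k - ε) * t) * Real.exp (2 * (k - ε) * t))) := by ring
        _ = B₀ ^ 2 := by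
            rw [← Real.exp_add, ← Real.exp_add, harg, Real.exp_zero, mul_one]
    have h1 : ‖u t‖ ^ 2 ≤ (B₀ * Real.exp (-(k - ε) * t)) ^ 2 := by
      have hgb := gbound t ht
      rw [hgdef] at hgb
      rw [← h2] at hgb
      exact (mul_le_mul_iff_left₀ hE).mp hgb
    have := Real.sqrt_le_sqrt h1
    rwa [Real.sqrt_sq (norm_nonneg _), Real.sqrt_sq (by positivity)] at this
  refine ⟨normbound, ?_⟩
  -- tendsto 0
  have hexp0 : Filter.Tendsto (fun t : ℝ => B₀ * Real.exp (-(k - ε) * t))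
      Filter.atTop (nhds 0) := by
    have h1 : Filter.Tendsto (fun t : ℝ => -(k - ε) * t) Filter.atTop Filter.atBot :=
      Filter.Tendsto.const_mul_atTop_of_neg (by linarith : -(k - ε) < 0) Filter.tendsto_id
    have := Real.tendsto_exp_atBot.comp h1
    simpa using this.const_mul B₀
  exact squeeze_zero' (Filter.eventually_atTop.mpr ⟨0, fun t _ => norm_nonneg _⟩)
    (Filter.eventually_atTop.mpr ⟨0, fun t ht => normbound t ht⟩) hexp0
end

section
/- Let A be an n×n complex matrix all of whose eigenvalues have negative real part, and let V be a positive-definite Hermitian n×n complex matrix. Then the function t ↦ 2·exp(A*t)·V·exp(At) (where A* is the conjugate transpose and exp is the matrix exponential) is integrable on [0,∞), and the matrix W = 2∫₀^∞ exp(A*t)·V·exp(At) dt is positive-definite Hermitian and satisfies the Lyapunov equation A*W + W·A = -2V. -/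
open Matrix MeasureTheory
open scoped ComplexOrder

attribute [local instance] Matrix.linftyOpNormedAddCommGroup Matrix.linftyOpNormedSpace
section LyapSec
attribute [local instance] Matrix.linftyOpNormedRing Matrix.linftyOpNormedAlgebra

open NormedSpace Nat

namespace LyapAux

variable {n : ℕ}



lemma charpoly_eval (A : Matrix (Fin n) (Fin n) ℂ) (z : ℂ) :
    A.charpoly.eval z = (z • (1 : Matrix (Fin n) (Fin n) ℂ) - A).det := by
  rw [Matrix.charpoly, ← Polynomial.coe_evalRingHom, RingHom.map_det]
  congr 1
  ext i j
  by_cases h : i = j <;>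
    simp [h, Matrix.charmatrix_apply_eq, Matrix.charmatrix_apply_ne, Matrix.one_apply,
      Matrix.smul_apply]

lemma isRoot_of_mulVec {A : Matrix (Fin n) (Fin n) ℂ} {μ : ℂ} {k : ℕ} {x : Fin n → ℂ}
    (hx : x ≠ 0) (h : ((A - μ • 1) ^ k).mulVec x = 0) : A.charpoly.IsRoot μ := by
  have hdet : ((A - μ • 1) ^ k).det = 0 :=
    (Matrix.exists_mulVec_eq_zero_iff).mp ⟨x, hx, h⟩
  rw [Matrix.det_pow] at hdet
  have h0 : (A - μ • 1).det = 0 := (pow_eq_zero_iff'.mp hdet).1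
  unfold Polynomial.IsRoot
  rw [charpoly_eval]
  rw [← neg_sub A (μ • 1), Matrix.det_neg, h0, mul_zero]




noncomputable def mulVecCLM (x : Fin n → ℂ) :
    Matrix (Fin n) (Fin n) ℂ →L[ℂ] (Fin n → ℂ) :=
  LinearMap.toContinuousLinearMap
    { toFun := fun M => M.mulVec x
      map_add' := fun M N => Matrix.add_mulVec M N x
      map_smul' := fun c M => Matrix.smul_mulVec c M x }

@[simp] lemma mulVecCLM_apply (x : Fin n → ℂ) (M : Matrix (Fin n) (Fin n) ℂ) :
    mulVecCLM x M = M.mulVec x := rfl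

lemma exp_smul_one (c : ℂ) :
    exp (c • (1 : Matrix (Fin n) (Fin n) ℂ)) = Complex.exp c • 1 := by
  have h1 : c • (1 : Matrix (Fin n) (Fin n) ℂ) = algebraMap ℂ _ c :=
    (Algebra.algebraMap_eq_smul_one c).symm
  erw [h1, ← map_exp (algebraMap ℂ (Matrix (Fin n) (Fin n) ℂ)) (continuous_algebraMap _ _),
    ← Complex.exp_eq_exp_ℂ, Algebra.algebraMap_eq_smul_one]

lemma exp_mulVec_genEig (A : Matrix (Fin n) (Fin n) ℂ) (μ : ℂ) (k : ℕ) (x : Fin n → ℂ)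
    (hx : ((A - μ • 1) ^ k).mulVec x = 0) (t : ℝ) :
    (exp ((t : ℂ) • A)).mulVec x
      = Complex.exp ((t : ℂ) * μ) • ∑ j ∈ Finset.range k,
          (((t : ℂ)) ^ j * ((j ! : ℂ))⁻¹) • ((A - μ • 1) ^ j).mulVec x := by
  set N := A - μ • 1 with hN
  have hsplit : (t : ℂ) • A = ((t : ℂ) * μ) • (1 : Matrix (Fin n) (Fin n) ℂ) + (t : ℂ) • N := by
    rw [hN, smul_sub, smul_smul]; abel
  have hcomm : Commute (((t : ℂ) * μ) • (1 : Matrix (Fin n) (Fin n) ℂ)) ((t : ℂ) • N) :=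
    ((Commute.one_left N).smul_left _).smul_right _
  rw [hsplit, Matrix.exp_add_of_commute _ _ hcomm, exp_smul_one, smul_mul_assoc, one_mul,
    Matrix.smul_mulVec]
  congr 1
  have hsum : (mulVecCLM x) (exp ((t : ℂ) • N))
      = ∑' j : ℕ, ((j ! : ℂ))⁻¹ • (((t : ℂ) • N) ^ j).mulVec x := by
    rw [exp_eq_tsum ℂ]
    exact ContinuousLinearMap.map_tsum _ (expSeries_summable' (𝕂 := ℂ) ((t : ℂ) • N)) |>.trans
      (tsum_congr fun j => Matrix.smul_mulVec ((j ! : ℂ))⁻¹ (((t : ℂ) • N) ^ j) x)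
  have hterm : ∀ j : ℕ, ((j ! : ℂ))⁻¹ • (((t : ℂ) • N) ^ j).mulVec x
      = ((t : ℂ) ^ j * ((j ! : ℂ))⁻¹) • (N ^ j).mulVec x := by
    intro j
    rw [smul_pow, Matrix.smul_mulVec, smul_smul, mul_comm]
  have hvanish : ∀ j ∉ Finset.range k,
      ((t : ℂ) ^ j * ((j ! : ℂ))⁻¹) • ((N : Matrix (Fin n) (Fin n) ℂ) ^ j).mulVec x = 0 := by
    intro j hj
    rw [Finset.mem_range, not_lt] at hj
    have : N ^ j = N ^ (j - k) * N ^ k := by rw [← pow_add]; congr 1; omega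
    rw [this, ← Matrix.mulVec_mulVec, hx, Matrix.mulVec_zero, smul_zero]
  calc (exp ((t : ℂ) • N)).mulVec x
      = (mulVecCLM x) (exp ((t : ℂ) • N)) := rfl
    _ = ∑' j : ℕ, ((t : ℂ) ^ j * ((j ! : ℂ))⁻¹) • (N ^ j).mulVec x := by
        rw [hsum]; exact tsum_congr hterm
    _ = _ := tsum_eq_sum hvanish



lemma key_ineq {ε t r a : ℝ} (hε : 0 < ε) (ht : 0 ≤ t) (hr : r ≤ -(2*ε)) (ha : 0 ≤ a) (j : ℕ) :
    Real.exp (t*r) * (t ^ j / (j ! : ℝ) * a) ≤ a / ε ^ j * Real.exp (-(ε*t)) := by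
  have h2 : t ^ j / (j ! : ℝ) ≤ Real.exp (ε*t) / ε ^ j := by
    rw [div_le_div_iff₀ (by positivity) (by positivity)]
    have h3 := Real.pow_div_factorial_le_exp (ε*t) (mul_nonneg hε.le ht) j
    rw [div_le_iff₀ (by positivity), mul_pow] at h3
    calc t ^ j * ε ^ j = ε ^ j * t ^ j := by ring
      _ ≤ Real.exp (ε*t) * (j !) := h3
  have h1 : Real.exp (t*r) ≤ Real.exp (-(2*ε)*t) := Real.exp_le_exp.mpr (by nlinarith)
  calc Real.exp (t*r) * (t ^ j / (j ! : ℝ) * a)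
      ≤ Real.exp (-(2*ε)*t) * (Real.exp (ε*t) / ε ^ j * a) :=
        mul_le_mul h1 (mul_le_mul_of_nonneg_right h2 ha) (by positivity) (by positivity)
    _ = a / ε ^ j * (Real.exp (-(2*ε)*t) * Real.exp (ε*t)) := by ring
    _ = a / ε ^ j * Real.exp (-(ε*t)) := by rw [← Real.exp_add]; ring_nf

lemma exists_eps {n : ℕ} (A : Matrix (Fin n) (Fin n) ℂ)
    (hA : ∀ z : ℂ, A.charpoly.IsRoot z → z.re < 0) :
    ∃ ε : ℝ, 0 < ε ∧ ∀ z : ℂ, A.charpoly.IsRoot z → z.re ≤ -(2 * ε) := by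
  set T := insert (-1 : ℂ) A.charpoly.roots.toFinset with hT
  have hne : T.Nonempty := ⟨-1, Finset.mem_insert_self _ _⟩
  set m := T.sup' hne Complex.re with hm
  have hmneg : m < 0 := by
    rw [hm]
    apply (Finset.sup'_lt_iff hne).mpr
    intro z hz
    rcases Finset.mem_insert.mp hz with h | h
    · simp [h]
    · exact hA z (Polynomial.isRoot_of_mem_roots (Multiset.mem_toFinset.mp h))
  refine ⟨-m / 2, by linarith, fun z hz => ?_⟩
  have hzT : z ∈ T := Finset.mem_insert_of_mem <| Multiset.mem_toFinset.mpr <|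
    Polynomial.mem_roots'.mpr ⟨A.charpoly_monic.ne_zero, hz⟩
  have := Finset.le_sup' Complex.re hzT
  rw [← hm] at this
  linarith




lemma decay_vec (A : Matrix (Fin n) (Fin n) ℂ) {ε : ℝ} (hε : 0 < ε)
    (hA : ∀ z : ℂ, A.charpoly.IsRoot z → z.re ≤ -(2 * ε)) (x : Fin n → ℂ) :
    ∃ C : ℝ, ∀ t : ℝ, 0 ≤ t →
      ‖(NormedSpace.exp ((t : ℂ) • A)).mulVec x‖ ≤ C * Real.exp (-(ε * t)) := by
  set f : Module.End ℂ (Fin n → ℂ) := Matrix.toLinAlgEquiv' A with hf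
  have htop : ⨆ μ : ℂ, f.maxGenEigenspace μ = ⊤ :=
    Module.End.iSup_maxGenEigenspace_eq_top _
  have hx : x ∈ ⨆ μ : ℂ, f.maxGenEigenspace μ := by
    rw [htop]; trivial
  refine Submodule.iSup_induction _
    (motive := fun x => ∃ C : ℝ, ∀ t : ℝ, 0 ≤ t →
      ‖(NormedSpace.exp ((t : ℂ) • A)).mulVec x‖ ≤ C * Real.exp (-(ε * t))) hx ?_ ?_ ?_
  · -- mem case
    intro μ x hxmem
    obtain ⟨k, hk⟩ := (Module.End.mem_maxGenEigenspace _ _ _).mp hxmem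
    by_cases hx0 : x = 0
    · exact ⟨0, fun t ht => by simp [hx0]⟩
    have hmat : ((A - μ • 1) ^ k).mulVec x = 0 := by
      have heq : (f - μ • 1) ^ k
          = Matrix.toLinAlgEquiv' ((A - μ • 1) ^ k) := by
        rw [hf, map_pow, map_sub, _root_.map_smul, _root_.map_one]
      rw [heq] at hk
      exact hk
    have hre : μ.re ≤ -(2 * ε) := hA μ (isRoot_of_mulVec hx0 hmat)
    set N := A - μ • 1 with hN
    refine ⟨∑ j ∈ Finset.range k, ‖(N ^ j).mulVec x‖ / ε ^ j, fun t ht => ?_⟩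
    rw [exp_mulVec_genEig A μ k x hmat t]
    rw [norm_smul]
    have hnorm : ‖Complex.exp ((t : ℂ) * μ)‖ = Real.exp (t * μ.re) := by
      rw [Complex.norm_exp]
      congr 1
      simp [Complex.mul_re]
    rw [hnorm]
    calc Real.exp (t * μ.re) * ‖∑ j ∈ Finset.range k,
          ((t : ℂ) ^ j * ((j ! : ℂ))⁻¹) • (N ^ j).mulVec x‖
        ≤ Real.exp (t * μ.re) * ∑ j ∈ Finset.range k,
            ‖((t : ℂ) ^ j * ((j ! : ℂ))⁻¹) • (N ^ j).mulVec x‖ := by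
          gcongr
          exact norm_sum_le _ _
      _ = ∑ j ∈ Finset.range k, Real.exp (t * μ.re) *
            (t ^ j / (j ! : ℝ) * ‖(N ^ j).mulVec x‖) := by
          rw [Finset.mul_sum]
          refine Finset.sum_congr rfl fun j _ => ?_
          congr 1
          rw [norm_smul]
          congr 1
          have : ((t : ℂ) ^ j * ((j ! : ℂ))⁻¹) = ((t ^ j / (j ! : ℝ) : ℝ) : ℂ) := by
            push_cast; ring
          rw [this, Complex.norm_real, Real.norm_of_nonneg (by positivity)]
      _ ≤ ∑ j ∈ Finset.range k, ‖(N ^ j).mulVec x‖ / ε ^ j * Real.exp (-(ε * t)) := by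
          refine Finset.sum_le_sum fun j _ => ?_
          exact key_ineq hε ht hre (norm_nonneg _) j
      _ = (∑ j ∈ Finset.range k, ‖(N ^ j).mulVec x‖ / ε ^ j) * Real.exp (-(ε * t)) := by
          rw [Finset.sum_mul]
  · -- zero
    exact ⟨0, fun t ht => by simp⟩
  · -- add
    rintro x y ⟨Cx, hCx⟩ ⟨Cy, hCy⟩
    refine ⟨Cx + Cy, fun t ht => ?_⟩
    rw [Matrix.mulVec_add, add_mul]
    exact (norm_add_le _ _).trans (add_le_add (hCx t ht) (hCy t ht))




lemma decay_matrix (A : Matrix (Fin n) (Fin n) ℂ)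
    (hA : ∀ z : ℂ, A.charpoly.IsRoot z → z.re < 0) :
    ∃ ε C : ℝ, 0 < ε ∧ ∀ t : ℝ, 0 ≤ t →
      ‖NormedSpace.exp ((t : ℂ) • A)‖ ≤ C * Real.exp (-(ε * t)) := by
  obtain ⟨ε, hε, hroots⟩ := exists_eps A hA
  choose C hC using fun j : Fin n => decay_vec A hε hroots (Pi.single j 1)
  refine ⟨ε, ∑ j, C j, hε, fun t ht => ?_⟩
  set M := NormedSpace.exp ((t : ℂ) • A) with hMdef
  have hent : ∀ i j, ‖M i j‖ ≤ C j * Real.exp (-(ε * t)) := by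
    intro i j
    have h1 : M.mulVec (Pi.single j 1) i = M i j := by
      simp [Matrix.mulVec_single]
    calc ‖M i j‖ = ‖M.mulVec (Pi.single j 1) i‖ := by rw [h1]
      _ ≤ ‖M.mulVec (Pi.single j 1)‖ := norm_le_pi_norm _ i
      _ ≤ C j * Real.exp (-(ε * t)) := hC j t ht
  have h0 : 0 ≤ (∑ j, C j) * Real.exp (-(ε * t)) := by
    have hCnn : ∀ j, 0 ≤ C j := by
      intro j
      have h := hC j 0 le_rfl
      simp only [mul_zero, neg_zero, Real.exp_zero, mul_one] at h
      exact le_trans (norm_nonneg _) h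
    have : 0 ≤ ∑ j, C j := Finset.sum_nonneg fun j _ => hCnn j
    positivity
  rw [Matrix.linfty_opNorm_def, ← Real.coe_toNNReal _ h0, NNReal.coe_le_coe]
  apply Finset.sup_le
  intro i _
  rw [← NNReal.coe_le_coe, NNReal.coe_sum, Real.coe_toNNReal _ h0]
  simp only [coe_nnnorm]
  calc (∑ j, ‖M i j‖) ≤ ∑ j, C j * Real.exp (-(ε * t)) :=
        Finset.sum_le_sum fun j _ => hent i j
    _ = (∑ j, C j) * Real.exp (-(ε * t)) := by rw [Finset.sum_mul]

lemma exp_real_smul (M : Matrix (Fin n) (Fin n) ℂ) (t : ℝ) :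
    NormedSpace.exp ((t : ℂ) • M) = NormedSpace.exp (t • M) := by
  rw [← Complex.coe_algebraMap, algebraMap_smul]

lemma hasDerivAt_expc (M : Matrix (Fin n) (Fin n) ℂ) (t : ℝ) :
    HasDerivAt (fun u : ℝ => NormedSpace.exp ((u : ℂ) • M))
      (NormedSpace.exp ((t : ℂ) • M) * M) t := by
  simp only [exp_real_smul]
  exact hasDerivAt_exp_smul_const (𝕂 := ℝ) M t

lemma hasDerivAt_expc' (M : Matrix (Fin n) (Fin n) ℂ) (t : ℝ) :
    HasDerivAt (fun u : ℝ => NormedSpace.exp ((u : ℂ) • M))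
      (M * NormedSpace.exp ((t : ℂ) • M)) t := by
  simp only [exp_real_smul]
  exact hasDerivAt_exp_smul_const' (𝕂 := ℝ) M t

noncomputable def entryCLM (i j : Fin n) : Matrix (Fin n) (Fin n) ℂ →L[ℂ] ℂ :=
  LinearMap.toContinuousLinearMap
    { toFun := fun M => M i j
      map_add' := fun _ _ => rfl
      map_smul' := fun _ _ => rfl }

@[simp] lemma entryCLM_apply (i j : Fin n) (M : Matrix (Fin n) (Fin n) ℂ) :
    entryCLM i j M = M i j := rfl

noncomputable def quadCLM (x : Fin n → ℂ) : Matrix (Fin n) (Fin n) ℂ →L[ℂ] ℂ :=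
  LinearMap.toContinuousLinearMap
    { toFun := fun M => star x ⬝ᵥ M.mulVec x
      map_add' := fun M N => by simp [Matrix.add_mulVec, dotProduct_add]
      map_smul' := fun c M => by simp [Matrix.smul_mulVec] }

@[simp] lemma quadCLM_apply (x : Fin n → ℂ) (M : Matrix (Fin n) (Fin n) ℂ) :
    quadCLM x M = star x ⬝ᵥ M.mulVec x := rfl

noncomputable def lyapCLM (A : Matrix (Fin n) (Fin n) ℂ) :
    Matrix (Fin n) (Fin n) ℂ →L[ℂ] Matrix (Fin n) (Fin n) ℂ :=
  LinearMap.toContinuousLinearMap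
    { toFun := fun M => Aᴴ * M + M * A
      map_add' := fun M N => by simp only [mul_add, add_mul]; abel
      map_smul' := fun c M => by
        simp only [RingHom.id_apply, smul_add, mul_smul_comm, smul_mul_assoc] }

@[simp] lemma lyapCLM_apply (A M : Matrix (Fin n) (Fin n) ℂ) :
    lyapCLM A M = Aᴴ * M + M * A := rfl

lemma mulVec_exp_ne_zero (M : Matrix (Fin n) (Fin n) ℂ) {x : Fin n → ℂ} (hx : x ≠ 0) :
    (NormedSpace.exp M).mulVec x ≠ 0 := by
  intro h
  obtain ⟨u, hu⟩ := Matrix.isUnit_exp M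
  apply hx
  calc x = (1 : Matrix (Fin n) (Fin n) ℂ).mulVec x := by simp
    _ = ((↑u⁻¹ * ↑u : Matrix (Fin n) (Fin n) ℂ)).mulVec x := by rw [Units.inv_mul]
    _ = (↑u⁻¹ : Matrix (Fin n) (Fin n) ℂ).mulVec ((↑u : Matrix (Fin n) (Fin n) ℂ).mulVec x) := by
        rw [Matrix.mulVec_mulVec]
    _ = 0 := by rw [hu, h, Matrix.mulVec_zero]

end LyapAux
end LyapSec


/-- If all eigenvalues of the complex `n×n` matrix `A` have negative real part and
`V` is Hermitian positive definite, then `t ↦ 2 exp(A*t) V exp(At)` is integrable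
on `[0,∞)`, and `W = 2∫₀^∞ exp(A*t) V exp(At) dt` is Hermitian positive definite
and solves the Lyapunov equation `A*W + WA = -2V`. -/
theorem lyapunov_equation_solution
    {n : ℕ} (A V : Matrix (Fin n) (Fin n) ℂ)
    (hA : ∀ z : ℂ, A.charpoly.IsRoot z → z.re < 0)
    (hV : V.PosDef) :
    @IntegrableOn ℝ (Matrix (Fin n) (Fin n) ℂ) _ _ SeminormedAddGroup.toContinuousENorm
      (fun t : ℝ => (2 : ℂ) •
        (NormedSpace.exp ((t : ℂ) • Aᴴ) * V * NormedSpace.exp ((t : ℂ) • A)))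
      (Set.Ici 0) volume ∧
    ∀ W : Matrix (Fin n) (Fin n) ℂ,
      W = ∫ t : ℝ in Set.Ici 0, (2 : ℂ) •
        (NormedSpace.exp ((t : ℂ) • Aᴴ) * V * NormedSpace.exp ((t : ℂ) • A)) →
      W.PosDef ∧ Aᴴ * W + W * A = -(2 : ℂ) • V := by
  classical
  letI : NormedRing (Matrix (Fin n) (Fin n) ℂ) := Matrix.linftyOpNormedRing
  letI : NormedAlgebra ℂ (Matrix (Fin n) (Fin n) ℂ) := Matrix.linftyOpNormedAlgebra
  letI : NormedAlgebra ℚ (Matrix (Fin n) (Fin n) ℂ) := Matrix.linftyOpNormedAlgebra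
  letI : ContinuousENorm (Matrix (Fin n) (Fin n) ℂ) := SeminormedAddGroup.toContinuousENorm
  haveI : TopologicalSpace.PseudoMetrizableSpace (Matrix (Fin n) (Fin n) ℂ) :=
    inferInstanceAs (TopologicalSpace.PseudoMetrizableSpace (Fin n → Fin n → ℂ))
  -- abbreviations
  let E : ℝ → Matrix (Fin n) (Fin n) ℂ := fun t => NormedSpace.exp ((t : ℂ) • A)
  let E' : ℝ → Matrix (Fin n) (Fin n) ℂ := fun t => NormedSpace.exp ((t : ℂ) • Aᴴ)
  let f : ℝ → Matrix (Fin n) (Fin n) ℂ := fun t => E' t * V * E t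
  have hfeq : (fun t : ℝ => (2 : ℂ) •
      (NormedSpace.exp ((t : ℂ) • Aᴴ) * V * NormedSpace.exp ((t : ℂ) • A)))
      = fun t => (2 : ℂ) • f t := rfl
  -- roots of Aᴴ
  have hAH : ∀ z : ℂ, (Aᴴ).charpoly.IsRoot z → z.re < 0 := by
    intro z hz
    have h1 : (z • (1 : Matrix (Fin n) (Fin n) ℂ) - Aᴴ).det = 0 := by
      rw [← LyapAux.charpoly_eval]; exact hz
    have hconj : (star z • (1 : Matrix (Fin n) (Fin n) ℂ) - A)ᴴ
        = z • (1 : Matrix (Fin n) (Fin n) ℂ) - Aᴴ := by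
      rw [Matrix.conjTranspose_sub, Matrix.conjTranspose_smul, star_star,
        Matrix.conjTranspose_one]
    have h2 : (star z • (1 : Matrix (Fin n) (Fin n) ℂ) - A).det = 0 := by
      have := h1
      rw [← hconj, Matrix.det_conjTranspose] at this
      exact star_eq_zero.mp this
    have hroot : A.charpoly.IsRoot (star z) := by
      unfold Polynomial.IsRoot
      rw [LyapAux.charpoly_eval]
      exact h2
    have := hA (star z) hroot
    simpa using this
  -- decay bounds
  obtain ⟨ε₁, C₁, hε₁, h₁⟩ := LyapAux.decay_matrix A hA
  obtain ⟨ε₂, C₂, hε₂, h₂⟩ := LyapAux.decay_matrix Aᴴ hAH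
  set K : ℝ := C₂ * C₁ * ‖V‖ with hK
  set ε : ℝ := ε₁ + ε₂ with hεdef
  have hε : 0 < ε := by positivity
  have hC₁ : 0 ≤ C₁ := by
    have h := h₁ 0 le_rfl
    simp only [mul_zero, neg_zero, Real.exp_zero, mul_one] at h
    exact le_trans (norm_nonneg _) h
  have hC₂ : 0 ≤ C₂ := by
    have h := h₂ 0 le_rfl
    simp only [mul_zero, neg_zero, Real.exp_zero, mul_one] at h
    exact le_trans (norm_nonneg _) h
  have hfbound : ∀ t : ℝ, 0 ≤ t → ‖f t‖ ≤ K * Real.exp (-(ε * t)) := by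
    intro t ht
    have hexp : Real.exp (-(ε₂ * t)) * Real.exp (-(ε₁ * t)) = Real.exp (-(ε * t)) := by
      rw [← Real.exp_add]; congr 1; rw [hεdef]; ring
    calc ‖E' t * V * E t‖ ≤ ‖E' t * V‖ * ‖E t‖ := norm_mul_le _ _
      _ ≤ ‖E' t‖ * ‖V‖ * ‖E t‖ :=
          mul_le_mul_of_nonneg_right (norm_mul_le _ _) (norm_nonneg _)
      _ ≤ (C₂ * Real.exp (-(ε₂ * t))) * ‖V‖ * (C₁ * Real.exp (-(ε₁ * t))) := by
          have hb₁ := h₁ t ht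
          have hb₂ := h₂ t ht
          have : (0:ℝ) ≤ ‖E' t‖ * ‖V‖ := by positivity
          apply mul_le_mul _ hb₁ (norm_nonneg _)
            (mul_nonneg (mul_nonneg hC₂ (Real.exp_nonneg _)) (norm_nonneg _))
          exact mul_le_mul_of_nonneg_right hb₂ (norm_nonneg _)
      _ = K * Real.exp (-(ε * t)) := by rw [hK, ← hexp]; ring
  -- continuity
  have hEcont : Continuous E :=
    NormedSpace.exp_continuous.comp (Complex.continuous_ofReal.smul continuous_const)
  have hE'cont : Continuous E' :=
    NormedSpace.exp_continuous.comp (Complex.continuous_ofReal.smul continuous_const)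
  have hfcont : Continuous f := (hE'cont.mul continuous_const).mul hEcont
  -- integrability
  have hgint : IntegrableOn (fun t : ℝ => K * Real.exp (-(ε * t))) (Set.Ici 0) := by
    rw [integrableOn_Ici_iff_integrableOn_Ioi]
    have := (exp_neg_integrableOn_Ioi 0 hε).const_mul K
    simpa [neg_mul, IntegrableOn] using this
  have hfint : IntegrableOn f (Set.Ici 0) := by
    apply Integrable.mono' hgint hfcont.aestronglyMeasurable.restrict
    filter_upwards [MeasureTheory.ae_restrict_mem measurableSet_Ici] with t ht
    exact hfbound t ht
  have hint2 : IntegrableOn (fun t => (2 : ℂ) • f t) (Set.Ici 0) := hfint.smul (2 : ℂ)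
  refine ⟨by rw [hfeq]; exact hint2, ?_⟩
  intro W hW
  rw [hfeq] at hW
  -- W = 2 • ∫ f over Ioi
  have hfintIoi : IntegrableOn f (Set.Ioi 0) := hfint.mono_set Set.Ioi_subset_Ici_self
  have hWeq : W = (2 : ℂ) • ∫ t in Set.Ioi (0:ℝ), f t := by
    rw [hW, MeasureTheory.integral_Ici_eq_integral_Ioi, integral_smul]
  -- Hermitian of integrand
  have hE'H : ∀ t : ℝ, E' t = (E t)ᴴ := by
    intro t
    show NormedSpace.exp ((t : ℂ) • Aᴴ) = (NormedSpace.exp ((t : ℂ) • A))ᴴ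
    rw [← Matrix.exp_conjTranspose, Matrix.conjTranspose_smul, Complex.star_def,
      Complex.conj_ofReal]
  have hfH : ∀ t : ℝ, (f t)ᴴ = f t := by
    intro t
    show (E' t * V * E t)ᴴ = E' t * V * E t
    rw [Matrix.conjTranspose_mul, Matrix.conjTranspose_mul, hV.1.eq, hE'H t,
      Matrix.conjTranspose_conjTranspose]
    exact (Matrix.mul_assoc _ _ _).symm
  -- entries of W as integrals
  have hWentry : ∀ i j, W i j = ∫ t in Set.Ici (0:ℝ), (2 : ℂ) • f t i j := by
    intro i j
    rw [hW]
    exact (ContinuousLinearMap.integral_comp_comm (LyapAux.entryCLM i j) hint2).symm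
  have hherm : W.IsHermitian := by
    ext i j
    rw [Matrix.conjTranspose_apply, hWentry i j, hWentry j i, Complex.star_def,
      ← integral_conj]
    congr 1
    funext t
    calc (starRingEnd ℂ) ((2 : ℂ) • f t j i)
        = star (((2 : ℂ) • f t) j i) := by rw [← Complex.star_def]; rfl
      _ = ((2 : ℂ) • f t)ᴴ i j := (Matrix.conjTranspose_apply _ _ _).symm
      _ = ((2 : ℂ) • f t) i j := by
          rw [Matrix.conjTranspose_smul, hfH t]
          simp [Matrix.smul_apply]
  -- positivity of quadratic form
  have hposdef : W.PosDef := by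
    refine PosDef.of_dotProduct_mulVec_pos hherm fun x hx => ?_
    set q := LyapAux.quadCLM x with hq
    have hWx : star x ⬝ᵥ W.mulVec x = ∫ t in Set.Ici (0:ℝ), q ((2 : ℂ) • f t) := by
      rw [hW]
      exact (ContinuousLinearMap.integral_comp_comm q hint2).symm
    have hqval : ∀ t : ℝ, q ((2 : ℂ) • f t)
        = 2 * (star (E t *ᵥ x) ⬝ᵥ V *ᵥ (E t *ᵥ x)) := by
      intro t
      rw [hq, LyapAux.quadCLM_apply, Matrix.smul_mulVec, dotProduct_smul]
      rw [smul_eq_mul]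
      congr 1
      show star x ⬝ᵥ (E' t * V * E t) *ᵥ x = _
      rw [← Matrix.mulVec_mulVec, ← Matrix.mulVec_mulVec, Matrix.dotProduct_mulVec,
        hE'H t, ← Matrix.star_mulVec]
    have hpos : ∀ t : ℝ, 0 < q ((2 : ℂ) • f t) := by
      intro t
      rw [hqval t]
      have hy : (E t) *ᵥ x ≠ 0 := LyapAux.mulVec_exp_ne_zero _ hx
      have := hV.dotProduct_mulVec_pos hy
      have h2 : (0:ℂ) < 2 := by norm_num
      exact mul_pos h2 this
    -- reduce to real integral
    set r : ℝ → ℝ := fun t => (q ((2 : ℂ) • f t)).re with hr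
    have hgr : ∀ t : ℝ, q ((2 : ℂ) • f t) = ((r t : ℝ) : ℂ) := by
      intro t
      have h := hpos t
      rw [Complex.lt_def] at h
      apply Complex.ext
      · simp [hr]
      · rw [Complex.ofReal_im, ← h.2]
        exact Complex.zero_im
    have hqint : IntegrableOn (fun t => q ((2 : ℂ) • f t)) (Set.Ici (0:ℝ)) :=
      q.integrable_comp hint2
    have hrint : IntegrableOn r (Set.Ici (0:ℝ)) := hqint.re
    have hrpos : ∀ t : ℝ, 0 < r t := by
      intro t
      have h := hpos t
      rw [Complex.lt_def] at h
      simpa [hr] using h.1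
    have hrintpos : 0 < ∫ t in Set.Ici (0:ℝ), r t := by
      rw [MeasureTheory.setIntegral_pos_iff_support_of_nonneg_ae
        (ae_of_all _ fun t => (hrpos t).le) hrint]
      have hsupp : Set.Ici (0:ℝ) ⊆ Function.support r ∩ Set.Ici 0 := by
        intro t ht
        exact ⟨(hrpos t).ne', ht⟩
      calc (0 : ENNReal) < ⊤ := by simp
        _ = volume (Set.Ici (0:ℝ)) := Real.volume_Ici.symm
        _ ≤ volume (Function.support r ∩ Set.Ici 0) := measure_mono hsupp
    rw [hWx]
    have : (∫ t in Set.Ici (0:ℝ), q ((2 : ℂ) • f t))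
        = (((∫ t in Set.Ici (0:ℝ), r t) : ℝ) : ℂ) := by
      rw [show (fun t => q ((2 : ℂ) • f t)) = fun t => ((r t : ℝ) : ℂ) from funext hgr]
      exact integral_ofReal
    rw [this]
    exact_mod_cast hrintpos
  refine ⟨hposdef, ?_⟩
  -- Lyapunov equation via FTC
  have hfderiv : ∀ t : ℝ, HasDerivAt f (Aᴴ * f t + f t * A) t := by
    intro t
    have hD := ((LyapAux.hasDerivAt_expc' Aᴴ t).mul_const V).mul (LyapAux.hasDerivAt_expc A t)
    convert hD using 1
    case e'_4 => rfl
    case e'_5 => rfl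
    case e'_6 => rfl
    case e'_8 => rfl
    show Aᴴ * (E' t * V * E t) + (E' t * V * E t) * A
        = Aᴴ * E' t * V * E t + E' t * V * (E t * A)
    noncomm_ring
  have htend : Filter.Tendsto f Filter.atTop (nhds 0) := by
    have hbnd : ∀ᶠ t in Filter.atTop, ‖f t‖ ≤ K * Real.exp (-(ε * t)) := by
      filter_upwards [Filter.eventually_ge_atTop (0:ℝ)] with t ht
      exact hfbound t ht
    have h1 : Filter.Tendsto (fun t : ℝ => ε * t) Filter.atTop Filter.atTop :=
      Filter.Tendsto.const_mul_atTop hε Filter.tendsto_id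
    have h2 : Filter.Tendsto (fun t : ℝ => Real.exp (-(ε * t))) Filter.atTop (nhds 0) :=
      Real.tendsto_exp_neg_atTop_nhds_zero.comp h1
    have hlim : Filter.Tendsto (fun t : ℝ => K * Real.exp (-(ε * t)))
        Filter.atTop (nhds 0) := by simpa using h2.const_mul K
    exact squeeze_zero_norm' hbnd hlim
  have hf'int : IntegrableOn (fun t => Aᴴ * f t + f t * A) (Set.Ioi (0:ℝ)) := by
    have := (LyapAux.lyapCLM A).integrable_comp hfintIoi
    exact this
  have hFTC : (∫ t in Set.Ioi (0:ℝ), (Aᴴ * f t + f t * A)) = 0 - f 0 :=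
    MeasureTheory.integral_Ioi_of_hasDerivAt_of_tendsto
      hfcont.continuousWithinAt (fun x _ => hfderiv x) hf'int htend
  have hf0 : f 0 = V := by
    show NormedSpace.exp (((0:ℝ) : ℂ) • Aᴴ) * V * NormedSpace.exp (((0:ℝ) : ℂ) • A) = V
    simp [NormedSpace.exp_zero]
  have hL : Aᴴ * W + W * A = (LyapAux.lyapCLM A) W := by simp
  rw [hL, hWeq, _root_.map_smul]
  have hcomm : (LyapAux.lyapCLM A) (∫ t in Set.Ioi (0:ℝ), f t)
      = ∫ t in Set.Ioi (0:ℝ), (Aᴴ * f t + f t * A) := by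
    exact (ContinuousLinearMap.integral_comp_comm (LyapAux.lyapCLM A) hfintIoi).symm
  rw [hcomm, hFTC, hf0]
  rw [zero_sub, smul_neg, neg_smul]
end

section
/- Let H be a complex Hilbert space, for each t ≥ 0 let A(t) be a bounded linear operator on H, depending continuously on t, and let F(t,·) : H → H satisfy ‖F(t,x)‖ ≤ c₀‖x‖^p for all t ≥ 0, x ∈ H, with constants c₀ > 0, p > 1. Assume there are constants N > 0 and a > 0 such that every differentiable v : [0,∞) → H satisfying v'(t) = A(t)(v(t)) for all t obeys ‖v(t)‖ ≤ N·e^{-a(t-s)}·‖v(s)‖ for all t ≥ s ≥ 0. Then the zero solution of u' = A(t)u + F(t,u) is asymptotically stable: for every ε > 0 there exists δ > 0 such that every differentiable u : [0,∞) → H satisfying u'(t) = A(t)(u(t)) + F(t,u(t)) for all t ≥ 0 with ‖u(0)‖ ≤ δ satisfies sup_{t≥0} ‖u(t)‖ ≤ ε and lim_{t→∞} ‖u(t)‖ = 0. -/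
open Set Filter MeasureTheory intervalIntegral Topology

namespace AsympStabAux

variable {H : Type*} [NormedAddCommGroup H] [NormedSpace ℂ H] [CompleteSpace H]

/-- Gluing two solutions of an ODE at a junction point. -/
lemma glue_hasDerivWithinAt {φ : ℝ → H → H} {f g : ℝ → H} {α m β : ℝ}
    (hαm : α ≤ m) (hmβ : m ≤ β)
    (hf : ∀ t ∈ Icc α m, HasDerivWithinAt f (φ t (f t)) (Icc α m) t)
    (hg : ∀ t ∈ Icc m β, HasDerivWithinAt g (φ t (g t)) (Icc m β) t)
    (hfg : f m = g m) :
    ∀ t ∈ Icc α β,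
      HasDerivWithinAt (fun s => if s ≤ m then f s else g s)
        (φ t (if t ≤ m then f t else g t)) (Icc α β) t := by
  intro t ht
  have hgh : ∀ s ∈ Icc m β, (if s ≤ m then f s else g s) = g s := by
    intro s hs
    rcases lt_or_eq_of_le hs.1 with h' | h'
    · exact if_neg (not_le.mpr h')
    · rw [← h', if_pos le_rfl, hfg]
  rcases lt_trichotomy t m with htm | htm | htm
  · have ht' : t ∈ Icc α m := ⟨ht.1, htm.le⟩
    have h1 : HasDerivWithinAt f (φ t (f t)) (Icc α β) t :=
      (hf t ht').mono_of_mem_nhdsWithin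
        (mem_nhdsWithin.mpr ⟨Iio m, isOpen_Iio, htm, fun s hs => ⟨hs.2.1, hs.1.le⟩⟩)
    have heq : (fun s => if s ≤ m then f s else g s) =ᶠ[𝓝[Icc α β] t] f := by
      filter_upwards [nhdsWithin_le_nhds (Iio_mem_nhds htm)] with s hs
      exact if_pos hs.le
    rw [if_pos htm.le]
    exact h1.congr_of_eventuallyEq heq (if_pos htm.le)
  · subst htm
    rw [if_pos le_rfl]
    have h1 : HasDerivWithinAt (fun s => if s ≤ t then f s else g s) (φ t (f t)) (Icc α t) t :=
      (hf t ⟨ht.1, le_rfl⟩).congr (fun s hs => if_pos hs.2) (if_pos le_rfl)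
    have h2 : HasDerivWithinAt (fun s => if s ≤ t then f s else g s) (φ t (f t)) (Icc t β) t := by
      have := (hg t ⟨le_rfl, ht.2⟩).congr hgh (hgh t ⟨le_rfl, ht.2⟩)
      rwa [← hfg] at this
    have h3 := h1.union h2
    rwa [Set.Icc_union_Icc_eq_Icc ht.1 ht.2] at h3
  · have ht' : t ∈ Icc m β := ⟨htm.le, ht.2⟩
    have h1 : HasDerivWithinAt g (φ t (g t)) (Icc α β) t :=
      (hg t ht').mono_of_mem_nhdsWithin
        (mem_nhdsWithin.mpr ⟨Ioi m, isOpen_Ioi, htm, fun s hs => ⟨hs.1.le, hs.2.2⟩⟩)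
    have heq : (fun s => if s ≤ m then f s else g s) =ᶠ[𝓝[Icc α β] t] g := by
      filter_upwards [nhdsWithin_le_nhds (Ioi_mem_nhds htm)] with s hs
      exact if_neg (not_le.mpr hs)
    rw [if_neg (not_le.mpr htm)]
    exact h1.congr_of_eventuallyEq heq (if_neg (not_le.mpr htm))

/-- Local existence for the linear ODE, with a uniform time-step. -/
lemma loc (A : ℝ → H →L[ℂ] H) {α β : ℝ} (hA : ContinuousOn A (Icc α β))
    {M : ℝ} (hM : 0 ≤ M) (hMb : ∀ t ∈ Icc α β, ‖A t‖ ≤ M)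
    (t₀ : ℝ) (ht₀ : t₀ ∈ Icc α β) (x₀ : H) :
    ∃ f : ℝ → H, f t₀ = x₀ ∧
      ∀ t ∈ Icc (max α (t₀ - (2*M+1)⁻¹)) (min β (t₀ + (2*M+1)⁻¹)),
        HasDerivWithinAt f (A t (f t))
          (Icc (max α (t₀ - (2*M+1)⁻¹)) (min β (t₀ + (2*M+1)⁻¹))) t := by
  have hτ : (0:ℝ) < (2*M+1)⁻¹ := by positivity
  set τ : ℝ := (2*M+1)⁻¹ with hτdef
  have hsub : Icc (max α (t₀ - τ)) (min β (t₀ + τ)) ⊆ Icc α β :=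
    Icc_subset_Icc (le_max_left _ _) (min_le_left _ _)
  have ht₀' : t₀ ∈ Icc (max α (t₀ - τ)) (min β (t₀ + τ)) :=
    ⟨max_le ht₀.1 (by linarith), le_min ht₀.2 (by linarith)⟩
  have hpl : IsPicardLindelof (fun t x => A t x)
      (⟨t₀, ht₀'⟩ : Icc (max α (t₀ - τ)) (min β (t₀ + τ))) x₀
      ⟨‖x₀‖ + 1, by positivity⟩ 0 ⟨M * (2*‖x₀‖+1), by positivity⟩ ⟨M, hM⟩ := by
    constructor
    · intro t ht
      have h1 : ‖A t‖₊ ≤ (⟨M, hM⟩ : NNReal) := by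
        exact NNReal.coe_le_coe.mp (hMb t (hsub ht))
      exact ((A t).lipschitz.weaken h1).lipschitzOnWith
    · intro x _
      exact (hA.mono hsub).clm_apply continuousOn_const
    · intro t ht x hx
      show ‖A t x‖ ≤ M * (2*‖x₀‖+1)
      have h1 : ‖A t x‖ ≤ ‖A t‖ * ‖x‖ := (A t).le_opNorm x
      have hxx : x = x₀ + (x - x₀) := by abel
      have h2 : ‖x‖ ≤ ‖x₀‖ + (‖x₀‖ + 1) := by
        calc ‖x‖ = ‖x₀ + (x - x₀)‖ := by rw [← hxx]
          _ ≤ ‖x₀‖ + ‖x - x₀‖ := norm_add_le _ _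
          _ ≤ ‖x₀‖ + (‖x₀‖ + 1) := by
              have : ‖x - x₀‖ ≤ ‖x₀‖ + 1 := mem_closedBall_iff_norm.mp hx
              linarith
      have h3 : ‖A t‖ ≤ M := hMb t (hsub ht)
      calc ‖A t x‖ ≤ ‖A t‖ * ‖x‖ := h1
        _ ≤ M * (2*‖x₀‖+1) := by nlinarith [norm_nonneg x, norm_nonneg (A t)]
    · show M * (2*‖x₀‖+1) * max (min β (t₀ + τ) - t₀) (t₀ - max α (t₀ - τ)) ≤ ‖x₀‖ + 1 - 0
      rw [sub_zero]
      have h1a : min β (t₀ + τ) - t₀ ≤ τ := by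
        have := min_le_right β (t₀ + τ); linarith
      have h1b : t₀ - max α (t₀ - τ) ≤ τ := by
        have := le_max_right α (t₀ - τ); linarith
      have h1 : max (min β (t₀ + τ) - t₀) (t₀ - max α (t₀ - τ)) ≤ τ := max_le h1a h1b
      have h2 : M * (2*‖x₀‖+1) * τ ≤ ‖x₀‖ + 1 := by
        have h3 : M * (2*‖x₀‖+1) ≤ (2*M+1) * (‖x₀‖+1) := by nlinarith [norm_nonneg x₀]
        calc M * (2*‖x₀‖+1) * τ ≤ ((2*M+1) * (‖x₀‖+1)) * τ :=
              mul_le_mul_of_nonneg_right h3 hτ.le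
          _ = ‖x₀‖ + 1 := by
              rw [hτdef]; field_simp
      calc M * (2*‖x₀‖+1) * max (min β (t₀ + τ) - t₀) (t₀ - max α (t₀ - τ))
          ≤ M * (2*‖x₀‖+1) * τ := mul_le_mul_of_nonneg_left h1 (by positivity)
        _ ≤ ‖x₀‖ + 1 := h2
  exact hpl.exists_eq_forall_mem_Icc_hasDerivWithinAt₀

/-- Forward chaining. -/
lemma fwd (A : ℝ → H →L[ℂ] H) {α β : ℝ} (hA : ContinuousOn A (Icc α β))
    {M : ℝ} (hM : 0 ≤ M) (hMb : ∀ t ∈ Icc α β, ‖A t‖ ≤ M) :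
    ∀ n : ℕ, ∀ t₀ ∈ Icc α β, ∀ x₀ : H, β - t₀ ≤ n * (2*M+1)⁻¹ + (2*M+1)⁻¹ →
      ∃ f : ℝ → H, f t₀ = x₀ ∧ ∀ t ∈ Icc t₀ β,
        HasDerivWithinAt f (A t (f t)) (Icc t₀ β) t := by
  have hτ : (0:ℝ) < (2*M+1)⁻¹ := by positivity
  set τ : ℝ := (2*M+1)⁻¹ with hτdef
  intro n
  induction n with
  | zero =>
    intro t₀ ht₀ x₀ hstep
    obtain ⟨f, hf0, hf⟩ := loc A hA hM hMb t₀ ht₀ x₀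
    refine ⟨f, hf0, fun t ht => ?_⟩
    have hsub : Icc t₀ β ⊆ Icc (max α (t₀ - τ)) (min β (t₀ + τ)) := by
      refine Icc_subset_Icc (max_le ht₀.1 (by linarith)) (le_min le_rfl ?_)
      push_cast at hstep; linarith
    exact (hf t (hsub ht)).mono hsub
  | succ n ih =>
    intro t₀ ht₀ x₀ hstep
    by_cases hle : β ≤ t₀ + τ
    · obtain ⟨f, hf0, hf⟩ := loc A hA hM hMb t₀ ht₀ x₀
      refine ⟨f, hf0, fun t ht => ?_⟩
      have hsub : Icc t₀ β ⊆ Icc (max α (t₀ - τ)) (min β (t₀ + τ)) :=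
        Icc_subset_Icc (max_le ht₀.1 (by linarith)) (le_min le_rfl hle)
      exact (hf t (hsub ht)).mono hsub
    · push_neg at hle
      set s : ℝ := t₀ + τ with hsdef
      have hsmem : s ∈ Icc α β := ⟨by linarith [ht₀.1], hle.le⟩
      obtain ⟨f, hf0, hf⟩ := loc A hA hM hMb t₀ ht₀ x₀
      have hsubf : Icc t₀ s ⊆ Icc (max α (t₀ - τ)) (min β (t₀ + τ)) :=
        Icc_subset_Icc (max_le ht₀.1 (by linarith)) (le_min hle.le le_rfl)
      obtain ⟨g, hg0, hg⟩ := ih s hsmem (f s) (by push_cast at hstep ⊢; linarith)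
      refine ⟨fun r => if r ≤ s then f r else g r,
        by show (if t₀ ≤ s then f t₀ else g t₀) = x₀
           rw [if_pos (by linarith : t₀ ≤ s)]; exact hf0, ?_⟩
      exact glue_hasDerivWithinAt (by linarith : t₀ ≤ s) hle.le
        (fun t ht => (hf t (hsubf ht)).mono hsubf) hg hg0.symm

/-- Backward chaining. -/
lemma bwd (A : ℝ → H →L[ℂ] H) {α β : ℝ} (hA : ContinuousOn A (Icc α β))
    {M : ℝ} (hM : 0 ≤ M) (hMb : ∀ t ∈ Icc α β, ‖A t‖ ≤ M) :
    ∀ n : ℕ, ∀ t₀ ∈ Icc α β, ∀ x₀ : H, t₀ - α ≤ n * (2*M+1)⁻¹ + (2*M+1)⁻¹ →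
      ∃ f : ℝ → H, f t₀ = x₀ ∧ ∀ t ∈ Icc α t₀,
        HasDerivWithinAt f (A t (f t)) (Icc α t₀) t := by
  have hτ : (0:ℝ) < (2*M+1)⁻¹ := by positivity
  set τ : ℝ := (2*M+1)⁻¹ with hτdef
  intro n
  induction n with
  | zero =>
    intro t₀ ht₀ x₀ hstep
    obtain ⟨f, hf0, hf⟩ := loc A hA hM hMb t₀ ht₀ x₀
    refine ⟨f, hf0, fun t ht => ?_⟩
    have hsub : Icc α t₀ ⊆ Icc (max α (t₀ - τ)) (min β (t₀ + τ)) := by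
      refine Icc_subset_Icc (max_le le_rfl ?_) (le_min ht₀.2 (by linarith))
      push_cast at hstep; linarith
    exact (hf t (hsub ht)).mono hsub
  | succ n ih =>
    intro t₀ ht₀ x₀ hstep
    by_cases hle : t₀ - τ ≤ α
    · obtain ⟨f, hf0, hf⟩ := loc A hA hM hMb t₀ ht₀ x₀
      refine ⟨f, hf0, fun t ht => ?_⟩
      have hsub : Icc α t₀ ⊆ Icc (max α (t₀ - τ)) (min β (t₀ + τ)) :=
        Icc_subset_Icc (max_le le_rfl hle) (le_min ht₀.2 (by linarith))
      exact (hf t (hsub ht)).mono hsub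
    · push_neg at hle
      set s : ℝ := t₀ - τ with hsdef
      have hsmem : s ∈ Icc α β := ⟨hle.le, by linarith [ht₀.2]⟩
      obtain ⟨f, hf0, hf⟩ := loc A hA hM hMb t₀ ht₀ x₀
      have hsubf : Icc s t₀ ⊆ Icc (max α (t₀ - τ)) (min β (t₀ + τ)) :=
        Icc_subset_Icc (max_le hle.le le_rfl) (le_min ht₀.2 (by linarith))
      obtain ⟨g, hg0, hg⟩ := ih s hsmem (f s) (by push_cast at hstep ⊢; linarith)
      refine ⟨fun r => if r ≤ s then g r else f r,
        by show (if t₀ ≤ s then g t₀ else f t₀) = x₀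
           rw [if_neg (by rw [hsdef]; intro hcon; linarith : ¬ t₀ ≤ s)]; exact hf0, ?_⟩
      exact glue_hasDerivWithinAt hle.le (by linarith : s ≤ t₀)
        hg (fun t ht => (hf t (hsubf ht)).mono hsubf) hg0

/-- Existence of a solution of the linear ODE on a compact interval through a given point. -/
lemma solve_Icc (A : ℝ → H →L[ℂ] H) {α β : ℝ} (hαβ : α ≤ β) (hA : ContinuousOn A (Icc α β))
    (t₀ : ℝ) (ht₀ : t₀ ∈ Icc α β) (x₀ : H) :
    ∃ f : ℝ → H, f t₀ = x₀ ∧ ∀ t ∈ Icc α β,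
      HasDerivWithinAt f (A t (f t)) (Icc α β) t := by
  obtain ⟨M₀, hM₀⟩ := isCompact_Icc.exists_bound_of_continuousOn hA
  set M : ℝ := max M₀ 0 with hMdef
  have hM : 0 ≤ M := le_max_right _ _
  have hMb : ∀ t ∈ Icc α β, ‖A t‖ ≤ M := fun t ht => (hM₀ t ht).trans (le_max_left _ _)
  have hτ : (0:ℝ) < (2*M+1)⁻¹ := by positivity
  obtain ⟨n, hn⟩ := exists_nat_ge ((β - α) / (2*M+1)⁻¹)
  have hlen : β - α ≤ n * (2*M+1)⁻¹ := by
    rw [div_le_iff₀ hτ] at hn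
    linarith
  obtain ⟨fl, hfl0, hfl⟩ := bwd A hA hM hMb n t₀ ht₀ x₀
    (by have := ht₀.1; have := ht₀.2; nlinarith)
  obtain ⟨fr, hfr0, hfr⟩ := fwd A hA hM hMb n t₀ ht₀ x₀
    (by have := ht₀.1; have := ht₀.2; nlinarith)
  refine ⟨fun r => if r ≤ t₀ then fl r else fr r,
    by show (if t₀ ≤ t₀ then fl t₀ else fr t₀) = x₀
       rw [if_pos le_rfl]; exact hfl0, ?_⟩
  exact glue_hasDerivWithinAt ht₀.1 ht₀.2 hfl hfr (hfl0.trans hfr0.symm)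

/-- Uniqueness of solutions of the linear ODE on `[0, b]`. -/
lemma uniq (A : ℝ → H →L[ℂ] H) (hA : ContinuousOn A (Ici 0)) {b : ℝ}
    {f g : ℝ → H} {s₀ : ℝ} (hs₀ : s₀ ∈ Icc 0 b)
    (hf : ∀ t ∈ Icc 0 b, HasDerivWithinAt f (A t (f t)) (Icc 0 b) t)
    (hg : ∀ t ∈ Icc 0 b, HasDerivWithinAt g (A t (g t)) (Icc 0 b) t)
    (heq : f s₀ = g s₀) : EqOn f g (Icc 0 b) := by
  classical
  have hb : (0:ℝ) ≤ b := hs₀.1.trans hs₀.2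
  obtain ⟨M₀, hM₀⟩ := isCompact_Icc.exists_bound_of_continuousOn
    (hA.mono (fun x (hx : x ∈ Icc (0:ℝ) b) => hx.1))
  set M : ℝ := max M₀ 0 with hMdef
  have hM : 0 ≤ M := le_max_right _ _
  have hMb : ∀ t ∈ Icc (0:ℝ) b, ‖A t‖ ≤ M := fun t ht => (hM₀ t ht).trans (le_max_left _ _)
  set clamp : ℝ → ℝ := fun t => max 0 (min t b) with hclampdef
  have hclmem : ∀ t, clamp t ∈ Icc (0:ℝ) b :=
    fun t => ⟨le_max_left _ _, max_le hb (min_le_right _ _)⟩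
  have hcl : ∀ t ∈ Icc (0:ℝ) b, clamp t = t := by
    intro t ht
    simp only [hclampdef]
    rw [min_eq_left ht.2, max_eq_right ht.1]
  set vf : ℝ → H → H := fun t x => A (clamp t) x with hvfdef
  have hlip : ∀ t, LipschitzOnWith ⟨M, hM⟩ (vf t) univ := by
    intro t
    have h1 : ‖A (clamp t)‖₊ ≤ (⟨M, hM⟩ : NNReal) := by
      exact NNReal.coe_le_coe.mp (hMb _ (hclmem t))
    exact ((A (clamp t)).lipschitz.weaken h1).lipschitzOnWith
  have hfc : ContinuousOn f (Icc 0 b) := fun t ht => (hf t ht).continuousWithinAt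
  have hgc : ContinuousOn g (Icc 0 b) := fun t ht => (hg t ht).continuousWithinAt
  have hright : ∀ (q : ℝ → H), (∀ t ∈ Icc 0 b, HasDerivWithinAt q (A t (q t)) (Icc 0 b) t) →
      ∀ t ∈ Ico s₀ b, HasDerivWithinAt q (vf t (q t)) (Ici t) t := by
    intro q hq t ht
    have htm : t ∈ Icc (0:ℝ) b := ⟨hs₀.1.trans ht.1, ht.2.le⟩
    have h1 : HasDerivWithinAt q (A t (q t)) (Icc t b) t :=
      (hq t htm).mono (Icc_subset_Icc htm.1 le_rfl)
    have h2 : HasDerivWithinAt q (A t (q t)) (Ici t) t :=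
      h1.mono_of_mem_nhdsWithin (Icc_mem_nhdsGE_of_mem ⟨le_rfl, ht.2⟩)
    simpa only [hvfdef, hcl t htm] using h2
  have hleft : ∀ (q : ℝ → H), (∀ t ∈ Icc 0 b, HasDerivWithinAt q (A t (q t)) (Icc 0 b) t) →
      ∀ t ∈ Ioc 0 s₀, HasDerivWithinAt q (vf t (q t)) (Iic t) t := by
    intro q hq t ht
    have htm : t ∈ Icc (0:ℝ) b := ⟨ht.1.le, ht.2.trans hs₀.2⟩
    have h1 : HasDerivWithinAt q (A t (q t)) (Icc 0 t) t :=
      (hq t htm).mono (Icc_subset_Icc le_rfl htm.2)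
    have h2 : HasDerivWithinAt q (A t (q t)) (Iic t) t :=
      h1.mono_of_mem_nhdsWithin (Icc_mem_nhdsLE_of_mem ⟨ht.1, le_rfl⟩)
    simpa only [hvfdef, hcl t htm] using h2
  have right : EqOn f g (Icc s₀ b) :=
    ODE_solution_unique_of_mem_Icc_right (fun t _ => hlip t)
      (hfc.mono (Icc_subset_Icc_left hs₀.1)) (hright f hf) (fun _ _ => mem_univ _)
      (hgc.mono (Icc_subset_Icc_left hs₀.1)) (hright g hg) (fun _ _ => mem_univ _) heq
  have left : EqOn f g (Icc 0 s₀) :=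
    ODE_solution_unique_of_mem_Icc_left (fun t _ => hlip t)
      (hfc.mono (Icc_subset_Icc_right hs₀.2)) (hleft f hf) (fun _ _ => mem_univ _)
      (hgc.mono (Icc_subset_Icc_right hs₀.2)) (hleft g hg) (fun _ _ => mem_univ _) heq
  intro t ht
  rcases le_total t s₀ with h | h
  · exact left ⟨ht.1, h⟩
  · exact right ⟨h, ht.2⟩

/-- Global existence for the linear ODE on `[0, ∞)` through a given point. -/
lemma global_solution (A : ℝ → H →L[ℂ] H) (hA : ContinuousOn A (Ici 0))
    (s₀ : ℝ) (hs₀ : 0 ≤ s₀) (x₀ : H) :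
    ∃ v : ℝ → H, v s₀ = x₀ ∧ ∀ t, 0 ≤ t → HasDerivAt v (A t (v t)) t := by
  classical
  have hchoice : ∀ T : ℝ, ∃ f : ℝ → H, f s₀ = x₀ ∧ ∀ t ∈ Icc 0 (max T s₀ + 1),
      HasDerivWithinAt f (A t (f t)) (Icc 0 (max T s₀ + 1)) t := by
    intro T
    refine solve_Icc A ?_ (hA.mono (fun x (hx : x ∈ Icc (0:ℝ) _) => hx.1)) s₀ ⟨hs₀, ?_⟩ x₀ <;>
      · have := le_max_right T s₀; linarith
  choose W hW1 hW2 using hchoice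
  have hcons' : ∀ T T' t : ℝ, 0 ≤ t → t ≤ max T s₀ + 1 → t ≤ max T' s₀ + 1 → W T t = W T' t := by
    have key : ∀ T T' : ℝ, max T s₀ + 1 ≤ max T' s₀ + 1 →
        EqOn (W T) (W T') (Icc 0 (max T s₀ + 1)) := by
      intro T T' hTT'
      refine uniq A hA ⟨hs₀, by have := le_max_right T s₀; linarith⟩ (hW2 T) ?_
        ((hW1 T).trans (hW1 T').symm)
      intro t ht
      exact (hW2 T' t (Icc_subset_Icc le_rfl hTT' ht)).mono (Icc_subset_Icc le_rfl hTT')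
    intro T T' t ht h1 h2
    rcases le_total (max T s₀ + 1) (max T' s₀ + 1) with h | h
    · exact key T T' h ⟨ht, h1⟩
    · exact (key T' T h ⟨ht, h2⟩).symm
  set v : ℝ → H := fun t => if 0 ≤ t then W t t else W 0 0 + t • (A 0 (W 0 0)) with hvdef
  have hvt : ∀ r : ℝ, 0 ≤ r → v r = W r r := by
    intro r hr; simp only [hvdef]; rw [if_pos hr]
  have hv0 : v 0 = W 0 0 := hvt 0 le_rfl
  refine ⟨v, by rw [hvt s₀ hs₀]; exact hW1 s₀, ?_⟩
  intro t ht
  rcases lt_or_eq_of_le ht with ht' | ht'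
  · have hmem : t ∈ Icc 0 (max t s₀ + 1) := ⟨ht, by have := le_max_left t s₀; linarith⟩
    have hW : HasDerivAt (W t) (A t (W t t)) t :=
      (hW2 t t hmem).hasDerivAt
        (Icc_mem_nhds ht' (by have := le_max_left t s₀; linarith))
    have heqv : v =ᶠ[𝓝 t] W t := by
      filter_upwards [Ioo_mem_nhds ht'
        (show t < max t s₀ + 1 by have := le_max_left t s₀; linarith)] with r hr
      rw [hvt r hr.1.le]
      exact hcons' r t r hr.1.le (by have := le_max_left r s₀; linarith) hr.2.le
    have hfinal := hW.congr_of_eventuallyEq heqv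
    rwa [← hvt t ht] at hfinal
  · subst ht'
    have hb0 : (0:ℝ) < max 0 s₀ + 1 := by have := le_max_left (0:ℝ) s₀; linarith
    have hmem0 : (0:ℝ) ∈ Icc 0 (max 0 s₀ + 1) := ⟨le_rfl, hb0.le⟩
    have r1 : HasDerivWithinAt (W 0) (A 0 (W 0 0)) (Ici 0) 0 :=
      (hW2 0 0 hmem0).mono_of_mem_nhdsWithin (Icc_mem_nhdsGE_of_mem ⟨le_rfl, hb0⟩)
    have r2 : HasDerivWithinAt v (A 0 (v 0)) (Ici 0) 0 := by
      rw [hv0]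
      refine r1.congr_of_eventuallyEq ?_ hv0
      filter_upwards [Icc_mem_nhdsGE_of_mem
        (⟨le_rfl, hb0⟩ : (0:ℝ) ∈ Ico 0 (max 0 s₀ + 1))] with r hr
      rw [hvt r hr.1]
      exact hcons' r 0 r hr.1 (by have := le_max_left r s₀; linarith) hr.2
    have l1 : HasDerivAt (fun r : ℝ => W 0 0 + r • (A 0 (W 0 0))) (A 0 (W 0 0)) 0 := by
      simpa using ((hasDerivAt_id (0:ℝ)).smul_const (A 0 (W 0 0))).const_add (W 0 0)
    have l2 : HasDerivWithinAt v (A 0 (v 0)) (Iic 0) 0 := by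
      rw [hv0]
      refine l1.hasDerivWithinAt.congr ?_ (by rw [hv0]; simp)
      intro r hr
      rcases lt_or_eq_of_le (mem_Iic.mp hr) with h | h
      · simp only [hvdef]; rw [if_neg (not_le.mpr h)]
      · rw [h, hv0]; simp
    have hfin := l2.union r2
    rw [Set.Iic_union_Ici] at hfin
    exact hasDerivWithinAt_univ.mp hfin

lemma exp_le_one_of_nonpos {x : ℝ} (hx : x ≤ 0) : Real.exp x ≤ 1 := by
  calc Real.exp x ≤ Real.exp 0 := Real.exp_le_exp.mpr hx
    _ = 1 := Real.exp_zero

/-- Duhamel-type integral inequality for the perturbed equation, proved via a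
Dini-derivative fencing argument. -/
lemma duhamel (A : ℝ → H →L[ℂ] H) (hA : ContinuousOn A (Ici 0))
    {N' a c₀ p : ℝ} (hN'1 : 1 ≤ N') (ha : 0 < a) (hc₀ : 0 < c₀) (hp0 : 0 ≤ p)
    (hlin' : ∀ v : ℝ → H, (∀ t : ℝ, 0 ≤ t → HasDerivAt v (A t (v t)) t) →
      ∀ s t : ℝ, 0 ≤ s → s ≤ t → ‖v t‖ ≤ N' * Real.exp (-a*(t-s)) * ‖v s‖)
    (F : ℝ → H → H) (hF : ∀ t : ℝ, 0 ≤ t → ∀ x : H, ‖F t x‖ ≤ c₀ * ‖x‖ ^ p)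
    (u : ℝ → H) (hu : ∀ t : ℝ, 0 ≤ t → HasDerivAt u (A t (u t) + F t (u t)) t)
    (t : ℝ) (ht : 0 ≤ t) :
    ‖u t‖ ≤ N' * Real.exp (-a*t) * ‖u 0‖
      + ∫ s in (0:ℝ)..t, N' * c₀ * Real.exp (-a*(t-s)) * ‖u (max s 0)‖ ^ p := by
  classical
  have hN'0 : (0:ℝ) < N' := lt_of_lt_of_le one_pos hN'1
  rcases eq_or_lt_of_le ht with ht0 | ht0
  · rw [← ht0]
    simp only [intervalIntegral.integral_same, mul_zero, neg_zero, Real.exp_zero,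
      mul_one, add_zero]
    nlinarith [norm_nonneg (u 0)]

  -- continuity of u on the right half line
  have hucont : ∀ s : ℝ, 0 ≤ s → ContinuousAt u s := fun s hs => (hu s hs).continuousAt
  have huc : Continuous (fun s : ℝ => u (max s 0)) := by
    have h1 : ContinuousOn u (Ici 0) := fun s hs => (hucont s hs).continuousWithinAt
    exact h1.comp_continuous (continuous_id.max continuous_const) (fun x => mem_Ici.mpr (le_max_right _ _))
  -- the chosen global linear solutions through (s, u s)
  have hsol : ∀ s : ℝ, 0 ≤ s → ∃ v : ℝ → H, v s = u s ∧
      ∀ r, 0 ≤ r → HasDerivAt v (A r (v r)) r :=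
    fun s hs => global_solution A hA s hs (u s)
  choose! V hV1 hV2 using hsol
  -- difference estimate from hlin'
  have hdiff : ∀ s z T : ℝ, 0 ≤ s → 0 ≤ z → z ≤ T →
      ‖V z T - V s T‖ ≤ N' * Real.exp (-a*(T - z)) * ‖u z - V s z‖ := by
    intro s z T hs hz hzT
    have hd : ∀ r : ℝ, 0 ≤ r → HasDerivAt (fun r => V z r - V s r)
        (A r ((fun r => V z r - V s r) r)) r := by
      intro r hr
      have h1 := (hV2 z hz r hr).sub (hV2 s hs r hr)
      simpa only [map_sub, Pi.sub_def] using h1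
    have h2 := hlin' (fun r => V z r - V s r) hd z T hz hzT
    simpa only [hV1 z hz] using h2
  -- a priori bound on the linear solutions
  have hVb : ∀ s r : ℝ, 0 ≤ s → s ≤ r → ‖V s r‖ ≤ N' * ‖u s‖ := by
    intro s r hs hsr
    have h1 := hlin' (V s) (hV2 s hs) s r hs hsr
    rw [hV1 s hs] at h1
    have h2 : Real.exp (-a*(r-s)) ≤ 1 := exp_le_one_of_nonpos (by nlinarith)
    calc ‖V s r‖ ≤ N' * Real.exp (-a*(r-s)) * ‖u s‖ := h1
      _ ≤ N' * 1 * ‖u s‖ :=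
          mul_le_mul_of_nonneg_right (mul_le_mul_of_nonneg_left h2 hN'0.le) (norm_nonneg _)
      _ = N' * ‖u s‖ := by ring
  -- bounds on ‖A‖ and ‖u‖ over [0, t]
  obtain ⟨M₀, hM₀⟩ := isCompact_Icc.exists_bound_of_continuousOn
    (hA.mono (fun x (hx : x ∈ Icc (0:ℝ) t) => hx.1))
  set M : ℝ := max M₀ 0 with hMdef
  have hM : 0 ≤ M := le_max_right _ _
  have hMb : ∀ r ∈ Icc (0:ℝ) t, ‖A r‖ ≤ M := fun r hr => (hM₀ r hr).trans (le_max_left _ _)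
  obtain ⟨B₀, hB₀⟩ := isCompact_Icc.exists_bound_of_continuousOn
    ((huc.norm).continuousOn (s := Icc (0:ℝ) t))
  set B : ℝ := max B₀ 0 with hBdef
  have hB : 0 ≤ B := le_max_right _ _
  have hBb : ∀ s ∈ Icc (0:ℝ) t, ‖u s‖ ≤ B := by
    intro s hs
    have h1 := (hB₀ s hs).trans (le_max_left B₀ 0)
    rwa [norm_norm, max_eq_left hs.1] at h1
  -- backward-in-initial-time estimate
  have hback : ∀ z s : ℝ, 0 ≤ z → z ≤ s → s ≤ t →
      ‖V z s - u z‖ ≤ (s - z) * (M * (N' * B)) := by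
    intro z s hz hzs hst
    have huicc : uIcc z s = Icc z s := uIcc_of_le hzs
    have hVcont : ContinuousOn (V z) (uIcc z s) := by
      rw [huicc]
      exact fun r hr => ((hV2 z hz r (hz.trans hr.1)).continuousAt).continuousWithinAt
    have hcont : ContinuousOn (fun r => A r (V z r)) (uIcc z s) := by
      refine ContinuousOn.clm_apply (hA.mono ?_) hVcont
      rw [huicc]; exact fun x hx => hz.trans hx.1
    have hderiv : ∀ r ∈ uIcc z s, HasDerivAt (V z) (A r (V z r)) r := by
      rw [huicc]; exact fun r hr => hV2 z hz r (hz.trans hr.1)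
    have heqint := intervalIntegral.integral_eq_sub_of_hasDerivAt hderiv
      hcont.intervalIntegrable
    rw [hV1 z hz] at heqint
    rw [← heqint]
    have hbound : ∀ r ∈ uIoc z s, ‖A r (V z r)‖ ≤ M * (N' * B) := by
      intro r hr
      rw [uIoc_of_le hzs] at hr
      have hr0 : (0:ℝ) ≤ r := hz.trans hr.1.le
      have h1 : ‖A r (V z r)‖ ≤ ‖A r‖ * ‖V z r‖ := (A r).le_opNorm _
      have h2 : ‖A r‖ ≤ M := hMb r ⟨hr0, hr.2.trans hst⟩
      have h3 : ‖V z r‖ ≤ N' * ‖u z‖ := hVb z r hz hr.1.le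
      have h4 : ‖u z‖ ≤ B := hBb z ⟨hz, hzs.trans hst⟩
      have h5 : ‖V z r‖ ≤ N' * B := h3.trans (by nlinarith)
      nlinarith [norm_nonneg (A r), norm_nonneg (V z r)]
    have h6 := intervalIntegral.norm_integral_le_of_norm_le_const hbound
    rwa [abs_of_nonneg (by linarith : (0:ℝ) ≤ s - z), mul_comm] at h6
  -- the key scalar function
  set g : ℝ → ℝ := fun s => ‖V s t‖ with hgdef
  have hgu : g t = ‖u t‖ := by simp only [hgdef]; rw [hV1 t ht]
  have hg0 : g 0 ≤ N' * Real.exp (-a*t) * ‖u 0‖ := by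
    have h1 := hlin' (V 0) (hV2 0 le_rfl) 0 t le_rfl ht
    rw [hV1 0 le_rfl] at h1
    simpa only [sub_zero] using h1
  -- continuity of g on [0, t]
  have hgcont : ContinuousOn g (Icc 0 t) := by
    intro s₀ hs₀
    set ψ : ℝ → ℝ := fun z =>
      N' * (dist (u (max z 0)) (u (max s₀ 0)) + |z - s₀| * (M * (N' * B))) with hψdef
    have main : ∀ z₁ z₂ : ℝ, z₁ ∈ Icc (0:ℝ) t → z₂ ∈ Icc (0:ℝ) t → z₁ ≤ z₂ →
        dist (g z₂) (g z₁) ≤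
          N' * (dist (u z₂) (u z₁) + |z₂ - z₁| * (M * (N' * B))) := by
      intro z₁ z₂ hz₁ hz₂ h12
      have h1 : dist (g z₂) (g z₁) ≤ ‖V z₂ t - V z₁ t‖ := by
        simp only [hgdef, Real.dist_eq]
        exact abs_norm_sub_norm_le _ _
      have h2 : ‖V z₂ t - V z₁ t‖ ≤ N' * Real.exp (-a*(t - z₂)) * ‖u z₂ - V z₁ z₂‖ :=
        hdiff z₁ z₂ t hz₁.1 hz₂.1 hz₂.2
      have h3 : ‖u z₂ - V z₁ z₂‖ ≤ ‖u z₂ - u z₁‖ + ‖u z₁ - V z₁ z₂‖ := by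
        have h3' : u z₂ - V z₁ z₂ = (u z₂ - u z₁) + (u z₁ - V z₁ z₂) := by abel
        rw [h3']; exact norm_add_le _ _
      have h4 : ‖u z₁ - V z₁ z₂‖ ≤ (z₂ - z₁) * (M * (N' * B)) := by
        rw [norm_sub_rev]
        exact hback z₁ z₂ hz₁.1 h12 hz₂.2
      have h5 : Real.exp (-a*(t - z₂)) ≤ 1 :=
        exp_le_one_of_nonpos (by nlinarith [hz₂.2])
      have h6 : ‖u z₂ - V z₁ z₂‖ ≤ dist (u z₂) (u z₁) + |z₂ - z₁| * (M * (N' * B)) := by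
        rw [dist_eq_norm, abs_of_nonneg (by linarith : (0:ℝ) ≤ z₂ - z₁)]
        linarith
      calc dist (g z₂) (g z₁) ≤ N' * Real.exp (-a*(t - z₂)) * ‖u z₂ - V z₁ z₂‖ :=
            h1.trans h2
        _ ≤ N' * 1 * ‖u z₂ - V z₁ z₂‖ :=
            mul_le_mul_of_nonneg_right (mul_le_mul_of_nonneg_left h5 hN'0.le) (norm_nonneg _)
        _ = N' * ‖u z₂ - V z₁ z₂‖ := by ring
        _ ≤ N' * (dist (u z₂) (u z₁) + |z₂ - z₁| * (M * (N' * B))) :=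
            mul_le_mul_of_nonneg_left h6 hN'0.le
    have key : ∀ z ∈ Icc (0:ℝ) t, dist (g z) (g s₀) ≤ ψ z := by
      intro z hz
      simp only [hψdef]
      rw [max_eq_left hz.1, max_eq_left hs₀.1]
      rcases le_total z s₀ with h | h
      · have h7 := main z s₀ hz hs₀ h
        rw [dist_comm (g z) (g s₀), dist_comm (u z) (u s₀), abs_sub_comm z s₀]
        exact h7
      · exact main s₀ z hs₀ hz h
    have hψc : Continuous ψ := by
      apply continuous_const.mul
      apply Continuous.add
      · exact huc.dist continuous_const
      · exact ((continuous_id.sub continuous_const).abs.mul continuous_const)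
    have hψ0 : ψ s₀ = 0 := by simp [hψdef]
    have hψt : Tendsto ψ (𝓝[Icc 0 t] s₀) (𝓝 0) := by
      have h8 := (hψc.tendsto s₀).mono_left (nhdsWithin_le_nhds (s := Icc (0:ℝ) t))
      rwa [hψ0] at h8
    refine tendsto_iff_dist_tendsto_zero.mpr ?_
    exact squeeze_zero' (Eventually.of_forall (fun z => dist_nonneg))
      (eventually_mem_nhdsWithin.mono key) hψt
  -- the comparison function
  set φ : ℝ → ℝ := fun s => N' * c₀ * Real.exp (-a*(t-s)) * ‖u (max s 0)‖ ^ p with hφdef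
  have hφcont : Continuous φ := by
    have h1 : Continuous fun s : ℝ => Real.exp (-a*(t-s)) :=
      Real.continuous_exp.comp (by fun_prop)
    have h2 : Continuous fun s : ℝ => ‖u (max s 0)‖ ^ p :=
      (huc.norm).rpow_const (fun x => Or.inr hp0)
    exact (continuous_const.mul h1).mul h2
  set Bf : ℝ → ℝ := fun s => g 0 + ∫ r in (0:ℝ)..s, φ r with hBfdef
  have hBfd : ∀ s : ℝ, HasDerivAt Bf (φ s) s := fun s =>
    (intervalIntegral.integral_hasDerivAt_right (hφcont.intervalIntegrable _ _)
      (hφcont.stronglyMeasurableAtFilter _ _) hφcont.continuousAt).const_add _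
  have hBfc : ContinuousOn Bf (Icc 0 t) := fun s _ => (hBfd s).continuousAt.continuousWithinAt
  have hBf' : ∀ s ∈ Ico (0:ℝ) t, HasDerivWithinAt Bf (φ s) (Ici s) s :=
    fun s _ => (hBfd s).hasDerivWithinAt
  have hga : g 0 ≤ Bf 0 := by simp [hBfdef]
  have hbound : ∀ s ∈ Ico (0:ℝ) t, ∀ r, φ s < r → ∃ᶠ z in 𝓝[>] s, slope g s z < r := by
    intro s hs r hr
    set w : ℝ → H := fun z => u z - V s z with hwdef
    have hw : HasDerivAt w (F s (u s)) s := by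
      have h1 := (hu s hs.1).sub (hV2 s hs.1 s hs.1)
      rw [hV1 s hs.1] at h1
      simpa [hwdef, Pi.sub_def] using h1
    have hws : w s = 0 := by simp [hwdef, hV1 s hs.1]
    have hsl : Tendsto (fun z => ‖slope w s z‖) (𝓝[>] s) (𝓝 ‖F s (u s)‖) := by
      have h1 := hasDerivAt_iff_tendsto_slope.mp hw
      exact (h1.mono_left (nhdsWithin_mono s (fun z hz => ne_of_gt hz))).norm
    have hexp : Tendsto (fun z : ℝ => N' * Real.exp (-a*(t-z))) (𝓝[>] s)
        (𝓝 (N' * Real.exp (-a*(t-s)))) :=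
      ((continuous_const.mul (Real.continuous_exp.comp (by fun_prop))).tendsto s).mono_left
        nhdsWithin_le_nhds
    have hmul : Tendsto (fun z => N' * Real.exp (-a*(t-z)) * ‖slope w s z‖) (𝓝[>] s)
        (𝓝 (N' * Real.exp (-a*(t-s)) * ‖F s (u s)‖)) := hexp.mul hsl
    have hlim_lt : N' * Real.exp (-a*(t-s)) * ‖F s (u s)‖ < r := by
      have h1 : ‖F s (u s)‖ ≤ c₀ * ‖u s‖ ^ p := hF s hs.1 (u s)
      have h2 : N' * Real.exp (-a*(t-s)) * ‖F s (u s)‖ ≤ φ s := by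
        simp only [hφdef]
        rw [max_eq_left hs.1]
        calc N' * Real.exp (-a*(t-s)) * ‖F s (u s)‖
            ≤ N' * Real.exp (-a*(t-s)) * (c₀ * ‖u s‖ ^ p) := by
              have h3 : (0:ℝ) ≤ N' * Real.exp (-a*(t-s)) :=
                mul_nonneg hN'0.le (Real.exp_pos _).le
              exact mul_le_mul_of_nonneg_left h1 h3
          _ = N' * c₀ * Real.exp (-a*(t-s)) * ‖u s‖ ^ p := by ring
      linarith
    have hev1 : ∀ᶠ z in 𝓝[>] s, N' * Real.exp (-a*(t-z)) * ‖slope w s z‖ < r :=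
      hmul (Iio_mem_nhds hlim_lt)
    have hev2 : ∀ᶠ z in 𝓝[>] s, z ∈ Ioc s t := Ioc_mem_nhdsGT_of_mem ⟨le_rfl, hs.2⟩
    refine ((hev1.and hev2).mono ?_).frequently
    rintro z ⟨hz1, hz2⟩
    have hzs : 0 < z - s := by linarith [hz2.1]
    have e1 : slope g s z = (g z - g s) / (z - s) := slope_def_field g s z
    have e2 : g z - g s ≤ ‖V z t - V s t‖ := by
      have h1 := abs_norm_sub_norm_le (V z t) (V s t)
      have h2 := le_abs_self (‖V z t‖ - ‖V s t‖)
      simp only [hgdef]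
      linarith
    have e3 : ‖V z t - V s t‖ ≤ N' * Real.exp (-a*(t-z)) * ‖w z‖ :=
      hdiff s z t hs.1 (hs.1.trans hz2.1.le) hz2.2
    have e4 : ‖slope w s z‖ = ‖w z‖ / (z - s) := by
      rw [slope_def_module, hws, sub_zero, norm_smul, norm_inv, Real.norm_eq_abs,
        abs_of_pos hzs, div_eq_inv_mul]
    have e5 : slope g s z ≤ N' * Real.exp (-a*(t-z)) * ‖slope w s z‖ := by
      rw [e1, e4, ← mul_div_assoc]
      exact (div_le_div_iff_of_pos_right hzs).mpr (e2.trans e3)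
    exact e5.trans_lt hz1
  have fence := image_le_of_liminf_slope_right_le_deriv_boundary hgcont hga hBfc hBf' hbound
  have hres : g t ≤ Bf t := fence ⟨ht, le_rfl⟩
  calc ‖u t‖ = g t := hgu.symm
    _ ≤ Bf t := hres
    _ ≤ N' * Real.exp (-a*t) * ‖u 0‖
        + ∫ s in (0:ℝ)..t, N' * c₀ * Real.exp (-a*(t-s)) * ‖u (max s 0)‖ ^ p := by
        simp only [hBfdef, hφdef]
        linarith [hg0]

end AsympStabAux

open AsympStabAux in
/-- **Proposition 1.1** (from Daleckii–Krein, Theorem 3.1 Ch. 7). If the linear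
problem `v' = A(t)v` has negative upper general (Bohl) exponent, i.e.
`‖v t‖ ≤ N e^{-a(t-s)} ‖v s‖` for all solutions and all `t ≥ s ≥ 0` with
constants `N > 0`, `a > 0`, and `‖F(t,x)‖ ≤ c₀‖x‖^p` with `p > 1`, then the zero
solution of `u' = A(t)u + F(t,u)` is asymptotically stable in the Lyapunov sense. -/
theorem asymptotic_stability_negative_bohl_exponent
    {H : Type*} [NormedAddCommGroup H] [InnerProductSpace ℂ H] [CompleteSpace H]
    (A : ℝ → H →L[ℂ] H) (hA_cont : ContinuousOn A (Set.Ici 0))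
    (F : ℝ → H → H)
    (c₀ p : ℝ) (hc₀ : 0 < c₀) (hp : 1 < p)
    (hF : ∀ t : ℝ, 0 ≤ t → ∀ x : H, ‖F t x‖ ≤ c₀ * ‖x‖ ^ p)
    (N a : ℝ) (hN : 0 < N) (ha : 0 < a)
    (hlin : ∀ v : ℝ → H, (∀ t : ℝ, 0 ≤ t → HasDerivAt v (A t (v t)) t) →
      ∀ s t : ℝ, 0 ≤ s → s ≤ t →
        ‖v t‖ ≤ N * Real.exp (-a * (t - s)) * ‖v s‖) :
    ∀ ε : ℝ, 0 < ε → ∃ δ : ℝ, 0 < δ ∧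
      ∀ u : ℝ → H, (∀ t : ℝ, 0 ≤ t → HasDerivAt u (A t (u t) + F t (u t)) t) →
        ‖u 0‖ ≤ δ →
        (∀ t : ℝ, 0 ≤ t → ‖u t‖ ≤ ε) ∧
        Filter.Tendsto (fun t : ℝ => ‖u t‖) Filter.atTop (nhds 0) := by
  classical
  intro ε hε
  set N' : ℝ := max N 1 with hN'def
  have hN'1 : 1 ≤ N' := le_max_right _ _
  have hN'0 : (0:ℝ) < N' := lt_of_lt_of_le one_pos hN'1
  have hlin' : ∀ v : ℝ → H, (∀ t : ℝ, 0 ≤ t → HasDerivAt v (A t (v t)) t) →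
      ∀ s t : ℝ, 0 ≤ s → s ≤ t → ‖v t‖ ≤ N' * Real.exp (-a*(t-s)) * ‖v s‖ := by
    intro v hv s t hs hst
    refine (hlin v hv s t hs hst).trans ?_
    have h1 : (0:ℝ) ≤ Real.exp (-a*(t-s)) * ‖v s‖ :=
      mul_nonneg (Real.exp_pos _).le (norm_nonneg _)
    have h2 : N ≤ N' := le_max_left _ _
    calc N * Real.exp (-a * (t - s)) * ‖v s‖ = N * (Real.exp (-a*(t-s)) * ‖v s‖) := by ring
      _ ≤ N' * (Real.exp (-a*(t-s)) * ‖v s‖) := mul_le_mul_of_nonneg_right h2 h1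
      _ = N' * Real.exp (-a*(t-s)) * ‖v s‖ := by ring
  have hp1 : (0:ℝ) < p - 1 := by linarith
  set m : ℝ := (a / (2 * N' * c₀)) ^ (1/(p-1)) with hmdef
  have hm0 : 0 < m := Real.rpow_pos_of_pos (by positivity) _
  have hmpow : m ^ (p-1) = a / (2*N'*c₀) := by
    rw [hmdef, ← Real.rpow_mul (le_of_lt (by positivity : (0:ℝ) < a / (2*N'*c₀))), one_div_mul_cancel (ne_of_gt hp1),
      Real.rpow_one]
  set K : ℝ := N' * c₀ * m ^ (p-1) with hKdef
  have hKa : K = a/2 := by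
    rw [hKdef, hmpow]; field_simp
  have hK0 : 0 < K := by rw [hKa]; positivity
  set δ : ℝ := min (m / (2*N')) (ε / N') with hδdef
  have hδ0 : 0 < δ := lt_min (by positivity) (by positivity)
  refine ⟨δ, hδ0, ?_⟩
  intro u hu hu0
  have hucont : ∀ s : ℝ, 0 ≤ s → ContinuousAt u s := fun s hs => (hu s hs).continuousAt
  have huc : Continuous (fun s : ℝ => u (max s 0)) := by
    have h1 : ContinuousOn u (Ici 0) := fun s hs => (hucont s hs).continuousWithinAt
    exact h1.comp_continuous (continuous_id.max continuous_const) (fun x => mem_Ici.mpr (le_max_right _ _))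
  have hδm : δ ≤ m / (2*N') := min_le_left _ _
  have hδε : δ ≤ ε / N' := min_le_right _ _
  have hu0m : ‖u 0‖ < m := by
    have h1 : m / (2*N') < m := by
      rw [div_lt_iff₀ (by positivity)]
      nlinarith
    linarith [hu0, hδm]
  -- the weighted function and its primitive
  set y : ℝ → ℝ := fun s => Real.exp (a*s) * ‖u (max s 0)‖ with hydef
  have hyc : Continuous y := (Real.continuous_exp.comp (by fun_prop)).mul huc.norm
  have hynn : ∀ s, 0 ≤ y s := fun s => mul_nonneg (Real.exp_pos _).le (norm_nonneg _)
  set Y : ℝ → ℝ := fun s => ∫ r in (0:ℝ)..s, y r with hYdef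
  have hYd : ∀ s : ℝ, HasDerivAt Y (y s) s := fun s =>
    intervalIntegral.integral_hasDerivAt_right (hyc.intervalIntegrable _ _)
      (hyc.stronglyMeasurableAtFilter _ _) hyc.continuousAt
  have hY0 : Y 0 = 0 := by simp [hYdef]
  have hYnn : ∀ s, 0 ≤ s → 0 ≤ Y s := fun s hs =>
    intervalIntegral.integral_nonneg hs (fun r _ => hynn r)
  -- Grönwall estimate, conditional on a uniform bound m on ‖u‖
  have gw : ∀ b : ℝ, 0 ≤ b → (∀ s ∈ Icc (0:ℝ) b, ‖u s‖ ≤ m) →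
      ∀ t ∈ Icc (0:ℝ) b, ‖u t‖ ≤ N' * ‖u 0‖ * Real.exp (-(a/2) * t) := by
    intro b hb hsm
    have hyb : ∀ t ∈ Icc (0:ℝ) b, y t ≤ N' * ‖u 0‖ + K * Y t := by
      intro t htb
      have hd := duhamel A hA_cont hN'1 ha hc₀ (by linarith : (0:ℝ) ≤ p) hlin' F hF u hu t htb.1
      have e0 : Real.exp (a*t) * Real.exp (-a*t) = 1 := by
        rw [← Real.exp_add]; ring_nf; exact Real.exp_zero
      have e1 : Real.exp (a*t) * ‖u t‖ ≤ N' * ‖u 0‖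
          + Real.exp (a*t) * ∫ s in (0:ℝ)..t, N' * c₀ * Real.exp (-a*(t-s)) * ‖u (max s 0)‖ ^ p := by
        have h1 := mul_le_mul_of_nonneg_left hd (Real.exp_pos (a*t)).le
        calc Real.exp (a*t) * ‖u t‖
            ≤ Real.exp (a*t) * (N' * Real.exp (-a*t) * ‖u 0‖
              + ∫ s in (0:ℝ)..t, N' * c₀ * Real.exp (-a*(t-s)) * ‖u (max s 0)‖ ^ p) := h1
          _ = (Real.exp (a*t) * Real.exp (-a*t)) * (N' * ‖u 0‖)
              + Real.exp (a*t) * ∫ s in (0:ℝ)..t, N' * c₀ * Real.exp (-a*(t-s)) * ‖u (max s 0)‖ ^ p := by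
              ring
          _ = N' * ‖u 0‖
              + Real.exp (a*t) * ∫ s in (0:ℝ)..t, N' * c₀ * Real.exp (-a*(t-s)) * ‖u (max s 0)‖ ^ p := by
              rw [e0, one_mul]
      have e2 : Real.exp (a*t) * (∫ s in (0:ℝ)..t, N' * c₀ * Real.exp (-a*(t-s)) * ‖u (max s 0)‖ ^ p)
          = ∫ s in (0:ℝ)..t, Real.exp (a*t) * (N' * c₀ * Real.exp (-a*(t-s)) * ‖u (max s 0)‖ ^ p) :=
        (intervalIntegral.integral_const_mul _ _).symm
      have e3 : ∀ s ∈ Icc (0:ℝ) t,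
          Real.exp (a*t) * (N' * c₀ * Real.exp (-a*(t-s)) * ‖u (max s 0)‖ ^ p) ≤ K * y s := by
        intro s hsi
        have hs0 : (0:ℝ) ≤ s := hsi.1
        have hsmax : max s 0 = s := max_eq_left hs0
        have hexp : Real.exp (a*t) * Real.exp (-a*(t-s)) = Real.exp (a*s) := by
          rw [← Real.exp_add]; ring_nf
        have hum : ‖u s‖ ≤ m := hsm s ⟨hs0, hsi.2.trans htb.2⟩
        have hpow : ‖u s‖ ^ p ≤ m ^ (p-1) * ‖u s‖ := by
          rcases eq_or_lt_of_le (norm_nonneg (u s)) with h0 | h0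
          · rw [← h0, Real.zero_rpow (by positivity : p ≠ 0), mul_zero]
          · have h1 : ‖u s‖ ^ p = ‖u s‖ ^ (p-1) * ‖u s‖ := by
              rw [← Real.rpow_add_one (ne_of_gt h0)]
              ring_nf
            rw [h1]
            exact mul_le_mul_of_nonneg_right
              (Real.rpow_le_rpow (norm_nonneg _) hum (by linarith)) (norm_nonneg _)
        calc Real.exp (a*t) * (N' * c₀ * Real.exp (-a*(t-s)) * ‖u (max s 0)‖ ^ p)
            = N' * c₀ * (Real.exp (a*t) * Real.exp (-a*(t-s))) * ‖u (max s 0)‖ ^ p := by ring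
          _ = N' * c₀ * Real.exp (a*s) * ‖u s‖ ^ p := by rw [hexp, hsmax]
          _ ≤ N' * c₀ * Real.exp (a*s) * (m ^ (p-1) * ‖u s‖) := by
              exact mul_le_mul_of_nonneg_left hpow (by positivity)
          _ = K * y s := by
              rw [hKdef, hydef]
              simp only
              rw [hsmax]
              ring
      have e4 : (∫ s in (0:ℝ)..t, Real.exp (a*t) * (N' * c₀ * Real.exp (-a*(t-s)) * ‖u (max s 0)‖ ^ p))
          ≤ ∫ s in (0:ℝ)..t, K * y s := by
        apply intervalIntegral.integral_mono_on htb.1 ?_ ?_ e3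
        · exact (continuous_const.mul ((continuous_const.mul
            (Real.continuous_exp.comp (by fun_prop))).mul
            (huc.norm.rpow_const (fun x => Or.inr (by linarith))))).intervalIntegrable _ _
        · exact (continuous_const.mul hyc).intervalIntegrable _ _
      have e5 : (∫ s in (0:ℝ)..t, K * y s) = K * Y t := intervalIntegral.integral_const_mul _ _
      have e6 : y t = Real.exp (a*t) * ‖u t‖ := by
        simp only [hydef]
        rw [max_eq_left htb.1]
      rw [e6]
      calc Real.exp (a*t) * ‖u t‖
          ≤ N' * ‖u 0‖ + Real.exp (a*t) * ∫ s in (0:ℝ)..t, N' * c₀ * Real.exp (-a*(t-s)) * ‖u (max s 0)‖ ^ p := e1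
        _ = N' * ‖u 0‖ + ∫ s in (0:ℝ)..t, Real.exp (a*t) * (N' * c₀ * Real.exp (-a*(t-s)) * ‖u (max s 0)‖ ^ p) := by
            rw [e2]
        _ ≤ N' * ‖u 0‖ + ∫ s in (0:ℝ)..t, K * y s := by linarith [e4]
        _ = N' * ‖u 0‖ + K * Y t := by rw [e5]
    -- Grönwall for Y
    have hYle : ∀ x ∈ Icc (0:ℝ) b, ‖Y x‖ ≤ gronwallBound 0 K (N' * ‖u 0‖) (x - 0) := by
      refine norm_le_gronwallBound_of_norm_deriv_right_le
        (fun x _ => (hYd x).continuousAt.continuousWithinAt)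
        (fun x _ => (hYd x).hasDerivWithinAt) (by simp [hY0]) ?_
      intro x hx
      have h1 := hyb x ⟨hx.1, hx.2.le⟩
      rw [Real.norm_eq_abs, Real.norm_eq_abs, abs_of_nonneg (hynn x),
        abs_of_nonneg (hYnn x hx.1)]
      linarith
    intro t htb
    have h1 : y t ≤ N' * ‖u 0‖ + K * Y t := hyb t htb
    have h2 : Y t ≤ N' * ‖u 0‖ / K * (Real.exp (K * t) - 1) := by
      have h3 := hYle t htb
      rw [gronwallBound_of_K_ne_0 (ne_of_gt hK0)] at h3
      simp only [zero_mul, zero_add, sub_zero, Real.norm_eq_abs] at h3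
      rwa [abs_of_nonneg (hYnn t htb.1)] at h3
    have h4 : y t ≤ N' * ‖u 0‖ * Real.exp (K * t) := by
      have h5 : K * Y t ≤ N' * ‖u 0‖ * (Real.exp (K*t) - 1) := by
        have := mul_le_mul_of_nonneg_left h2 hK0.le
        calc K * Y t ≤ K * (N' * ‖u 0‖ / K * (Real.exp (K * t) - 1)) := this
          _ = N' * ‖u 0‖ * (Real.exp (K*t) - 1) := by field_simp
      linarith
    -- convert back to ‖u t‖
    have h6 : Real.exp (a*t) * ‖u t‖ = y t := by
      simp only [hydef]; rw [max_eq_left htb.1]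
    have h7 : ‖u t‖ ≤ N' * ‖u 0‖ * Real.exp (K * t) / Real.exp (a * t) := by
      rw [le_div_iff₀ (Real.exp_pos _)]
      calc ‖u t‖ * Real.exp (a*t) = Real.exp (a*t) * ‖u t‖ := by ring
        _ = y t := h6
        _ ≤ N' * ‖u 0‖ * Real.exp (K * t) := h4
    calc ‖u t‖ ≤ N' * ‖u 0‖ * Real.exp (K * t) / Real.exp (a * t) := h7
      _ = N' * ‖u 0‖ * Real.exp (-(a/2) * t) := by
          rw [mul_div_assoc, ← Real.exp_sub, hKa]
          ring_nf
  -- bootstrap: the bound m holds forever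
  have hNd : N' * δ ≤ m / 2 := by
    have h1 := mul_le_mul_of_nonneg_left hδm hN'0.le
    calc N' * δ ≤ N' * (m / (2*N')) := h1
      _ = m / 2 := by field_simp
  have boot : ∀ s : ℝ, 0 ≤ s → ‖u s‖ ≤ m := by
    by_contra hcon
    push_neg at hcon
    obtain ⟨s₁, hs₁, hs₁m⟩ := hcon
    set bad : Set ℝ := {s : ℝ | 0 ≤ s ∧ m < ‖u s‖} with hbaddef
    have hne : bad.Nonempty := ⟨s₁, hs₁, hs₁m⟩
    have hbdd : BddBelow bad := ⟨0, fun x hx => hx.1⟩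
    set c : ℝ := sInf bad with hcdef
    have hc0 : 0 ≤ c := le_csInf hne (fun x hx => hx.1)
    have hlt : ∀ s : ℝ, 0 ≤ s → s < c → ‖u s‖ ≤ m := by
      intro s hs hsc
      by_contra h
      push_neg at h
      exact absurd (csInf_le hbdd ⟨hs, h⟩) (not_le.mpr hsc)
    have hcm : m ≤ ‖u c‖ := by
      by_contra h
      push_neg at h
      have hcont : ContinuousAt (fun x => ‖u x‖) c := (hucont c hc0).norm
      have hev : ∀ᶠ x in 𝓝 c, ‖u x‖ < m := hcont (Iio_mem_nhds h)
      obtain ⟨η, hη, hball⟩ := Metric.eventually_nhds_iff.mp hev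
      have hlb : ∀ x ∈ bad, c + η/2 ≤ x := by
        intro x hx
        by_contra hxc
        push_neg at hxc
        have hcx : c ≤ x := csInf_le hbdd hx
        have : dist x c < η := by
          rw [Real.dist_eq, abs_of_nonneg (by linarith)]
          linarith
        exact absurd hx.2 (not_lt.mpr (hball this).le)
      have := le_csInf hne hlb
      rw [← hcdef] at this
      linarith
    rcases eq_or_lt_of_le hc0 with hc | hc
    · rw [← hc] at hcm
      linarith [hu0m]
    · have hle : ∀ s ∈ Icc (0:ℝ) c, ‖u s‖ ≤ m := by
        intro s hs
        rcases lt_or_eq_of_le hs.2 with h | h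
        · exact hlt s hs.1 h
        · rw [h]
          have htd : Tendsto (fun z => ‖u z‖) (𝓝[<] c) (𝓝 ‖u c‖) :=
            ((hucont c hc0).norm).mono_left nhdsWithin_le_nhds
          refine le_of_tendsto htd ?_
          filter_upwards [Ioo_mem_nhdsLT_of_mem (⟨hc, le_rfl⟩ : c ∈ Ioc 0 c)] with z hz
          exact hlt z hz.1.le hz.2
      have h1 := gw c hc0 hle c ⟨hc0, le_rfl⟩
      have h2 : Real.exp (-(a/2)*c) ≤ 1 := exp_le_one_of_nonpos (by nlinarith)
      have h3 : N' * ‖u 0‖ ≤ N' * δ := mul_le_mul_of_nonneg_left hu0 hN'0.le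
      have h4 : ‖u c‖ ≤ m / 2 := by
        calc ‖u c‖ ≤ N' * ‖u 0‖ * Real.exp (-(a/2)*c) := h1
          _ ≤ N' * ‖u 0‖ * 1 := mul_le_mul_of_nonneg_left h2 (by positivity)
          _ = N' * ‖u 0‖ := by ring
          _ ≤ N' * δ := h3
          _ ≤ m / 2 := hNd
      linarith
  -- conclusion
  have hdecay : ∀ t : ℝ, 0 ≤ t → ‖u t‖ ≤ N' * δ * Real.exp (-(a/2) * t) := by
    intro t ht
    have h1 := gw t ht (fun s hs => boot s hs.1) t ⟨ht, le_rfl⟩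
    have h3 : N' * ‖u 0‖ ≤ N' * δ := mul_le_mul_of_nonneg_left hu0 hN'0.le
    calc ‖u t‖ ≤ N' * ‖u 0‖ * Real.exp (-(a/2)*t) := h1
      _ ≤ N' * δ * Real.exp (-(a/2)*t) :=
          mul_le_mul_of_nonneg_right h3 (Real.exp_pos _).le
  constructor
  · intro t ht
    have h1 := hdecay t ht
    have h2 : Real.exp (-(a/2)*t) ≤ 1 := exp_le_one_of_nonpos (by nlinarith)
    have h3 : N' * δ ≤ ε := by
      have h4 := mul_le_mul_of_nonneg_left hδε hN'0.le
      calc N' * δ ≤ N' * (ε / N') := h4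
        _ = ε := by field_simp
    calc ‖u t‖ ≤ N' * δ * Real.exp (-(a/2)*t) := h1
      _ ≤ N' * δ * 1 := mul_le_mul_of_nonneg_left h2 (by positivity)
      _ = N' * δ := by ring
      _ ≤ ε := h3
  · have hlim : Tendsto (fun t : ℝ => N' * δ * Real.exp (-(a/2) * t)) atTop (𝓝 0) := by
      have h1 : Tendsto (fun t : ℝ => -(a/2) * t) atTop atBot :=
        tendsto_id.const_mul_atTop_of_neg (by linarith)
      have h2 : Tendsto (fun t : ℝ => Real.exp (-(a/2) * t)) atTop (𝓝 0) :=
        Real.tendsto_exp_atBot.comp h1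
      have h3 := h2.const_mul (N' * δ)
      simpa using h3
    refine squeeze_zero' ?_ ?_ hlim
    · filter_upwards with t using norm_nonneg _
    · filter_upwards [eventually_ge_atTop (0:ℝ)] with t ht using hdecay t ht
end
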